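/- arXiv:math/0508041 — 3 statements merged into one kernel-verified Lean document; each statement's English description precedes it below -/
import Mathlib

section
/- For any permutation π of [n] and positive integers k, l, we have Ω(π; kl) = Σ_{στ = π} Ω(σ; k)·Ω(τ; l), where the sum is over all pairs of permutations σ, τ of [n] with στ = π, and Ω(π; m) = C(m + n - 1 - des(π), n) is the order polynomial of π. -/
open scoped Classical

noncomputable section

/-- The value of `π` at the 1-based position `i`, with the convention
`π(0) = π(n+1) = 0` and values in `{1, …, n}`. -/
def pval {n : ℕ} (π : Equiv.Perm (Fin n)) (i : ℕ) : ℕ :=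
  if h : 1 ≤ i ∧ i ≤ n then ((π ⟨i - 1, by omega⟩ : Fin n) : ℕ) + 1 else 0

/-- The descent set of `π`: positions `1 ≤ s ≤ n-1` with `π(s) > π(s+1)`. -/
def desSet {n : ℕ} (π : Equiv.Perm (Fin n)) : Finset ℕ :=
  (Finset.Ico 1 n).filter fun s => pval π (s + 1) < pval π s

/-- The descent number of `π`. -/
def des {n : ℕ} (π : Equiv.Perm (Fin n)) : ℕ := (desSet π).card

/-- The order polynomial `Ω(π; m) = C(m + n - 1 - des(π), n)`. -/
def ordPoly {n : ℕ} (π : Equiv.Perm (Fin n)) (m : ℕ) : ℕ :=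
  Nat.choose (m + n - 1 - des π) n

lemma mem_desSet_iff {n : ℕ} (π : Equiv.Perm (Fin n)) (i : ℕ) (h : i + 1 < n) :
    (i + 1) ∈ desSet π ↔ (π ⟨i + 1, h⟩ : ℕ) < (π ⟨i, by omega⟩ : ℕ) := by
  have h1 : (1 ≤ i + 1 + 1 ∧ i + 1 + 1 ≤ n) := by omega
  have h2 : (1 ≤ i + 1 ∧ i + 1 ≤ n) := by omega
  rw [desSet, Finset.mem_filter, Finset.mem_Ico, pval, pval, dif_pos h1, dif_pos h2]
  have e1 : (⟨i + 1 + 1 - 1, by omega⟩ : Fin n) = ⟨i + 1, h⟩ := by ext; simp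
  have e2 : (⟨i + 1 - 1, by omega⟩ : Fin n) = ⟨i, by omega⟩ := by ext; simp
  rw [e1, e2]
  constructor
  · rintro ⟨-, hx⟩; omega
  · intro hx; exact ⟨by omega, by omega⟩

lemma des_le {n : ℕ} (π : Equiv.Perm (Fin n)) : des π ≤ n - 1 := by
  have := Finset.card_filter_le (Finset.Ico 1 n) (fun s => pval π (s + 1) < pval π s)
  simpa [des, desSet] using this

def dcount {n : ℕ} (π : Equiv.Perm (Fin n)) (i : ℕ) : ℕ :=
  ((desSet π).filter (· ≤ i)).card

lemma dcount_le_self {n : ℕ} (π : Equiv.Perm (Fin n)) (i : ℕ) : dcount π i ≤ i := by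
  have hsub : ((desSet π).filter (· ≤ i)) ⊆ Finset.Icc 1 i := by
    intro x hx
    simp only [Finset.mem_filter, desSet, Finset.mem_Ico] at hx
    simp only [Finset.mem_Icc]
    omega
  calc dcount π i ≤ (Finset.Icc 1 i).card := Finset.card_le_card hsub
    _ = i := by simp

lemma dcount_le_des {n : ℕ} (π : Equiv.Perm (Fin n)) (i : ℕ) : dcount π i ≤ des π :=
  Finset.card_filter_le _ _

lemma des_le_dcount_add {n : ℕ} (π : Equiv.Perm (Fin n)) (i : ℕ) :
    des π ≤ dcount π i + (n - 1 - i) := by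
  have hsplit := Finset.card_filter_add_card_filter_not
    (s := desSet π) (p := (· ≤ i))
  have hsub : ((desSet π).filter (fun x => ¬ x ≤ i)) ⊆ Finset.Icc (i+1) (n-1) := by
    intro x hx
    simp only [Finset.mem_filter, desSet, Finset.mem_Ico] at hx
    simp only [Finset.mem_Icc]
    omega
  have h2 : ((desSet π).filter (fun x => ¬ x ≤ i)).card ≤ n - 1 - i := by
    calc _ ≤ (Finset.Icc (i+1) (n-1)).card := Finset.card_le_card hsub
      _ = n - 1 - i := by rw [Nat.card_Icc]; omega
  have : dcount π i + ((desSet π).filter (fun x => ¬ x ≤ i)).card = des π := hsplit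
  omega

lemma dcount_succ {n : ℕ} (π : Equiv.Perm (Fin n)) (i : ℕ) :
    dcount π (i + 1) = dcount π i + (if (i + 1) ∈ desSet π then 1 else 0) := by
  unfold dcount
  have : (desSet π).filter (· ≤ i + 1) =
      ((desSet π).filter (· ≤ i)) ∪ ((desSet π).filter (· = i + 1)) := by
    rw [← Finset.filter_or]
    apply Finset.filter_congr
    intro x _
    constructor
    · intro hx; omega
    · intro hx; omega
  rw [this, Finset.card_union_of_disjoint, Finset.filter_eq']
  · split_ifs with hmem
    · rw [Finset.card_singleton]
    · rw [Finset.card_empty]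
  · rw [Finset.disjoint_left]
    intro x hx hy
    simp only [Finset.mem_filter] at hx hy
    omega

lemma steps_le {n : ℕ} (F : Fin n → ℕ) (g : ℕ) (i j : Fin n) (hij : i ≤ j)
    (hF : ∀ s, (hs : s + 1 < n) → (i : ℕ) ≤ s → s + 1 ≤ (j : ℕ) →
      F ⟨s, by omega⟩ + g ≤ F ⟨s + 1, hs⟩) :
    F i + g * ((j : ℕ) - (i : ℕ)) ≤ F j := by
  obtain ⟨t, ht⟩ : ∃ t, (j : ℕ) = (i : ℕ) + t := ⟨(j : ℕ) - i, by
    have := Fin.le_def.mp hij; omega⟩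
  induction t generalizing j with
  | zero =>
      have : i = j := Fin.ext (by omega)
      subst this; simp
  | succ t ih =>
      have hj' : (i : ℕ) + t < n := by omega
      set j' : Fin n := ⟨(i : ℕ) + t, hj'⟩ with hj'def
      have h1 : F i + g * t ≤ F j' := by
        have := ih j' (Fin.le_def.mpr (by simp [hj'def]))
          (fun s hs h1 h2 => hF s hs h1 (by simp [hj'def] at h2; omega))
          (by simp [hj'def])
        simpa [hj'def] using this
      have h2 : F j' + g ≤ F j := by
        have heq : j = ⟨(i : ℕ) + t + 1, by omega⟩ :=
          Fin.ext (by simp only [Fin.val_mk]; omega)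
        rw [heq]
        exact hF ((i : ℕ) + t) (by omega) (by omega) (by omega)
      have he : (j : ℕ) - (i : ℕ) = t + 1 := by omega
      rw [he, Nat.mul_succ, ← Nat.add_assoc]
      exact le_trans (Nat.add_le_add_right h1 g) h2

lemma sort_eq_iff_consec {n m : ℕ} (π : Equiv.Perm (Fin n)) (f : Fin n → Fin m) :
    Tuple.sort f = π ↔ ∀ i : ℕ, ∀ h : i + 1 < n,
      ((f (π ⟨i, by omega⟩) : ℕ) ≤ (f (π ⟨i + 1, h⟩) : ℕ)) ∧
      ((i + 1) ∈ desSet π → (f (π ⟨i, by omega⟩) : ℕ) < (f (π ⟨i + 1, h⟩) : ℕ)) := by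
  rw [eq_comm, Tuple.eq_sort_iff]
  constructor
  · rintro ⟨hmono, hties⟩ i h
    have hlt : (⟨i, by omega⟩ : Fin n) < ⟨i + 1, h⟩ := by
      rw [Fin.lt_def]; simp
    have h1 : f (π ⟨i, by omega⟩) ≤ f (π ⟨i + 1, h⟩) := hmono hlt.le
    refine ⟨h1, fun hdes => ?_⟩
    rw [mem_desSet_iff π i h] at hdes
    rcases lt_or_eq_of_le h1 with h2 | h2
    · exact h2
    · have := hties _ _ hlt h2
      rw [Fin.lt_def] at this
      omega
  · intro H
    have Fmono : ∀ x y : Fin n, x ≤ y → (f (π x) : ℕ) ≤ (f (π y) : ℕ) := by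
      intro x y hxy
      have := steps_le (fun z => (f (π z) : ℕ)) 0 x y hxy
        (fun s hs _ _ => by simpa using (H s hs).1)
      simpa using this
    constructor
    · intro x y hxy
      exact Fmono x y hxy
    · intro a b hab heq
      have hFeq : (f (π a) : ℕ) = (f (π b) : ℕ) := by rw [heq]
      have step : ∀ s, (hs : s + 1 < n) → (a : ℕ) ≤ s → s + 1 ≤ (b : ℕ) →
          ((π ⟨s, by omega⟩ : Fin n) : ℕ) + 1 ≤ ((π ⟨s + 1, hs⟩ : Fin n) : ℕ) := by
        intro s hs has hsb
        have h1 : (f (π a) : ℕ) ≤ (f (π ⟨s, by omega⟩) : ℕ) :=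
          Fmono a ⟨s, by omega⟩ (Fin.le_def.mpr (by simpa using has))
        have h2 : (f (π ⟨s + 1, hs⟩) : ℕ) ≤ (f (π b) : ℕ) :=
          Fmono ⟨s + 1, hs⟩ b (Fin.le_def.mpr (by simpa using hsb))
        have h3 : (f (π ⟨s, by omega⟩) : ℕ) ≤ (f (π ⟨s + 1, hs⟩) : ℕ) := (H s hs).1
        have heqs : (f (π ⟨s, by omega⟩) : ℕ) = (f (π ⟨s + 1, hs⟩) : ℕ) := by omega
        have hnotdes : (s + 1) ∉ desSet π := by
          intro hmem
          have := (H s hs).2 hmem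
          omega
        rw [mem_desSet_iff π s hs] at hnotdes
        have hne : ((π ⟨s, by omega⟩ : Fin n) : ℕ) ≠ ((π ⟨s + 1, hs⟩ : Fin n) : ℕ) := by
          intro hcontra
          have : (⟨s, by omega⟩ : Fin n) = ⟨s + 1, hs⟩ := π.injective (Fin.ext hcontra)
          have : s = s + 1 := congrArg Fin.val this
          omega
        omega
      have := steps_le (fun z => ((π z : Fin n) : ℕ)) 1 a b hab.le step
      rw [Fin.lt_def]
      have hba : (a : ℕ) < (b : ℕ) := Fin.lt_def.mp hab
      simp only [one_mul] at this
      omega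

lemma card_strictMono (n N : ℕ) :
    (Finset.univ.filter fun F : Fin n → Fin N => StrictMono F).card = N.choose n := by
  have h1 : (Finset.univ.filter fun F : Fin n → Fin N => StrictMono F).card
      = Fintype.card {F : Fin n → Fin N // StrictMono F} := (Fintype.card_subtype _).symm
  have e : {F : Fin n → Fin N // StrictMono F} ≃ {s : Finset (Fin N) // s.card = n} := by
    refine
      { toFun := fun F => ⟨Finset.univ.map ⟨F.1, F.2.injective⟩, by simp⟩
        invFun := fun s => ⟨⇑(s.1.orderEmbOfFin s.2), (s.1.orderEmbOfFin s.2).strictMono⟩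
        left_inv := ?_
        right_inv := ?_ }
    · intro F
      apply Subtype.ext
      exact (Finset.orderEmbOfFin_unique _ (fun x => by simp) F.2).symm
    · intro s
      apply Subtype.ext
      apply Finset.coe_injective
      rw [Finset.coe_map, Finset.coe_univ, Set.image_univ]
      exact Finset.range_orderEmbOfFin s.1 s.2
  rw [h1, Fintype.card_congr e, Fintype.card_finset_len, Fintype.card_fin]

lemma card_sort_eq {n m : ℕ} (hm : 0 < m) (π : Equiv.Perm (Fin n)) :
    (Finset.univ.filter fun f : Fin n → Fin m => Tuple.sort f = π).card = ordPoly π m := by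
  rcases Nat.eq_zero_or_pos n with hn | hn
  · subst hn
    have hdes : des π = 0 := by simp [des, desSet]
    have hall : ∀ f : Fin 0 → Fin m, Tuple.sort f = π := fun f => Subsingleton.elim _ _
    rw [Finset.filter_true_of_mem (fun f _ => hall f)]
    simp [ordPoly, hdes]
  · have hd : des π ≤ n - 1 := des_le π
    rw [show ordPoly π m = (m + n - 1 - des π).choose n from rfl,
      ← card_strictMono n (m + n - 1 - des π)]
    set N := m + n - 1 - des π with hN
    apply Finset.card_bij (fun (f : Fin n → Fin m) _ =>
      (fun i : Fin n => (⟨(f (π i) : ℕ) + ((i : ℕ) - dcount π (i : ℕ)), by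
        have b1 : (f (π i) : ℕ) < m := (f (π i)).isLt
        have b2 := dcount_le_self π (i : ℕ)
        have b3 := des_le_dcount_add π (i : ℕ)
        have b5 := i.isLt
        omega⟩ : Fin N)))
    · -- membership: strict mono
      intro f hf
      simp only [Finset.mem_filter, Finset.mem_univ, true_and] at hf ⊢
      have H := (sort_eq_iff_consec π f).mp hf
      intro a b hab
      rw [Fin.lt_def]
      simp only [Fin.val_mk]
      have := steps_le (fun z : Fin n => (f (π z) : ℕ) + ((z : ℕ) - dcount π (z : ℕ))) 1 a b hab.le
        (fun s hs h1 h2 => by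
          simp only [Fin.val_mk]
          have hs1 := (H s hs).1
          have hs2 := (H s hs).2
          have hdc := dcount_succ π s
          have b2 := dcount_le_self π s
          by_cases hmem : (s + 1) ∈ desSet π
          · have := hs2 hmem
            rw [if_pos hmem] at hdc
            omega
          · rw [if_neg hmem] at hdc
            omega)
      have hba : (a : ℕ) < (b : ℕ) := Fin.lt_def.mp hab
      have key : ((f (π a) : ℕ) + ((a : ℕ) - dcount π (a : ℕ))) + 1 * ((b : ℕ) - (a : ℕ))
          ≤ (f (π b) : ℕ) + ((b : ℕ) - dcount π (b : ℕ)) := this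
      omega
    · -- injectivity
      intro f1 hf1 f2 hf2 heq
      funext x
      have := congrFun heq (π⁻¹ x)
      apply_fun Fin.val at this
      simp only [Fin.val_mk, Equiv.Perm.coe_inv, Equiv.apply_symm_apply] at this
      exact Fin.ext (by omega)
    · -- surjectivity
      intro F hFmem
      simp only [Finset.mem_filter, Finset.mem_univ, true_and] at hFmem
      have hstep : ∀ s, (hs : s + 1 < n) → (F ⟨s, by omega⟩ : ℕ) + 1 ≤ (F ⟨s + 1, hs⟩ : ℕ) := by
        intro s hs
        have := hFmem (show (⟨s, by omega⟩ : Fin n) < ⟨s + 1, hs⟩ by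
          rw [Fin.lt_def]; simp)
        rw [Fin.lt_def] at this
        omega
      have hge : ∀ i : Fin n, (i : ℕ) ≤ (F i : ℕ) := by
        intro i
        have := steps_le (fun z : Fin n => (F z : ℕ)) 1 ⟨0, hn⟩ i
          (Fin.le_def.mpr (by simp)) (fun s hs h1 h2 => hstep s hs)
        simp only [Fin.val_mk] at this
        omega
      have hle : ∀ i : Fin n, (F i : ℕ) + ((n - 1) - (i : ℕ)) < N := by
        intro i
        have hlast : (i : ℕ) ≤ n - 1 := by have := i.isLt; omega
        have := steps_le (fun z : Fin n => (F z : ℕ)) 1 i ⟨n - 1, by omega⟩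
          (Fin.le_def.mpr (by simp [hlast])) (fun s hs h1 h2 => hstep s hs)
        have hlt := (F ⟨n - 1, by omega⟩).isLt
        simp only [Fin.val_mk] at this
        omega
      refine ⟨fun x => ⟨(F (π⁻¹ x) : ℕ) - (((π⁻¹ x : Fin n) : ℕ) - dcount π ((π⁻¹ x : Fin n) : ℕ)), by
        have b2 := dcount_le_self π ((π⁻¹ x : Fin n) : ℕ)
        have b3 := des_le_dcount_add π ((π⁻¹ x : Fin n) : ℕ)
        have b4 := dcount_le_des π ((π⁻¹ x : Fin n) : ℕ)
        have b5 := (π⁻¹ x).isLt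
        have b6 := hle (π⁻¹ x)
        have b7 := hge (π⁻¹ x)
        omega⟩, ?_, ?_⟩
      · -- sort = π
        simp only [Finset.mem_filter, Finset.mem_univ, true_and]
        rw [sort_eq_iff_consec]
        intro s hs
        simp only [Equiv.Perm.coe_inv, Equiv.symm_apply_apply, Fin.val_mk]
        have h1 := hstep s hs
        have hdc := dcount_succ π s
        have b2 := dcount_le_self π s
        have b7 : (s : ℕ) ≤ (F ⟨s, by omega⟩ : ℕ) := hge ⟨s, by omega⟩
        constructor
        · by_cases hmem : (s + 1) ∈ desSet π
          · rw [if_pos hmem] at hdc; omega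
          · rw [if_neg hmem] at hdc; omega
        · intro hmem
          rw [if_pos hmem] at hdc
          omega
      · -- Φ f = F
        funext i
        apply Fin.ext
        simp only [Fin.val_mk, Equiv.Perm.coe_inv, Equiv.symm_apply_apply]
        have b2 := dcount_le_self π (i : ℕ)
        have b7 := hge i
        omega

lemma sort_comp_orderIso {n : ℕ} {α β : Type*} [LinearOrder α] [LinearOrder β]
    (e : α ≃o β) (f : Fin n → α) :
    Tuple.sort (fun i => e (f i)) = Tuple.sort f := by
  symm
  rw [Tuple.eq_sort_iff]
  have h := (Tuple.eq_sort_iff (f := f) (σ := Tuple.sort f)).mp rfl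
  constructor
  · intro a b hab
    exact e.monotone (h.1 hab)
  · intro i j hij heq
    exact h.2 i j hij (e.injective heq)

lemma sort_lex {n : ℕ} {α β : Type*} [LinearOrder α] [LinearOrder β]
    (f : Fin n → α) (g : Fin n → β) :
    Tuple.sort (fun i => toLex (g i, f i)) =
      Tuple.sort f * Tuple.sort (g ∘ Tuple.sort f) := by
  symm
  rw [Tuple.eq_sort_iff]
  set σ := Tuple.sort f with hσ
  set τ := Tuple.sort (g ∘ σ) with hτ
  have hf := (Tuple.eq_sort_iff (f := f) (σ := σ)).mp rfl
  have hg := (Tuple.eq_sort_iff (f := g ∘ σ) (σ := τ)).mp rfl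
  have happ : ∀ i, (σ * τ) i = σ (τ i) := fun i => rfl
  constructor
  · intro a b hab
    simp only [Function.comp_apply, happ]
    rcases eq_or_lt_of_le hab with rfl | hab'
    · exact le_refl _
    rcases eq_or_lt_of_le (hg.1 hab : g (σ (τ a)) ≤ g (σ (τ b))) with heq | hlt
    · have hτab : τ a < τ b := hg.2 a b hab' heq
      have hfle : f (σ (τ a)) ≤ f (σ (τ b)) := hf.1 hτab.le
      rw [Prod.Lex.le_iff]
      exact Or.inr ⟨heq, hfle⟩
    · rw [Prod.Lex.le_iff]
      exact Or.inl hlt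
  · intro i j hij heq
    simp only [happ] at heq ⊢
    have heq' : (g (σ (τ i)), f (σ (τ i))) = (g (σ (τ j)), f (σ (τ j))) := toLex.injective heq
    have hg_eq : g (σ (τ i)) = g (σ (τ j)) := congrArg Prod.fst heq'
    have hf_eq : f (σ (τ i)) = f (σ (τ j)) := congrArg Prod.snd heq'
    have hτij : τ i < τ j := hg.2 i j hij hg_eq
    exact hf.2 (τ i) (τ j) hτij hf_eq
theorem stmt1 (n k l : ℕ) (hk : 0 < k) (hl : 0 < l) (π : Equiv.Perm (Fin n)) :
    ordPoly π (k * l) =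
      ∑ p ∈ Finset.univ.filter
          (fun p : Equiv.Perm (Fin n) × Equiv.Perm (Fin n) => p.1 * p.2 = π),
        ordPoly p.1 k * ordPoly p.2 l := by
  classical
  have hkl : 0 < k * l := Nat.mul_pos hk hl
  rw [← card_sort_eq hkl π]
  have hcard : Fintype.card (Fin l ×ₗ Fin k) = k * l := by
    rw [Fintype.card_congr (toLex (α := Fin l × Fin k)).symm]
    simp [mul_comm]
  set e := monoEquivOfFin (Fin l ×ₗ Fin k) hcard with he
  have step2 : (Finset.univ.filter fun f : Fin n → Fin (k * l) => Tuple.sort f = π).card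
      = (Finset.univ.filter fun H : Fin n → (Fin l ×ₗ Fin k) => Tuple.sort H = π).card := by
    apply Finset.card_bij' (fun f _ => fun i => e (f i)) (fun H _ => fun i => e.symm (H i))
    · intro f hf
      simp only [Finset.mem_filter, Finset.mem_univ, true_and] at hf ⊢
      rw [sort_comp_orderIso e f]; exact hf
    · intro H hH
      simp only [Finset.mem_filter, Finset.mem_univ, true_and] at hH ⊢
      rw [sort_comp_orderIso e.symm H]; exact hH
    · intro f _; funext i; simp
    · intro H _; funext i; simp
  rw [step2]
  set fib : (Fin n → (Fin l ×ₗ Fin k)) → Equiv.Perm (Fin n) × Equiv.Perm (Fin n) :=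
    fun H => (Tuple.sort (fun i => (ofLex (H i)).2),
      Tuple.sort ((fun i => (ofLex (H i)).1) ∘ Tuple.sort (fun i => (ofLex (H i)).2))) with hfib
  have hsortH : ∀ H : Fin n → (Fin l ×ₗ Fin k),
      Tuple.sort H = (fib H).1 * (fib H).2 := by
    intro H
    have hH : H = fun i => toLex ((ofLex (H i)).1, (ofLex (H i)).2) := rfl
    rw [hfib]
    conv_lhs => rw [hH]
    exact sort_lex (fun i => (ofLex (H i)).2) (fun i => (ofLex (H i)).1)
  rw [Finset.card_eq_sum_card_fiberwise (f := fib)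
    (t := Finset.univ.filter (fun p : Equiv.Perm (Fin n) × Equiv.Perm (Fin n) => p.1 * p.2 = π))
    (fun H hH => by
      simp only [Finset.mem_coe, Finset.mem_filter, Finset.mem_univ, true_and] at hH ⊢
      rw [← hsortH H]; exact hH)]
  apply Finset.sum_congr rfl
  intro p hp
  simp only [Finset.mem_filter, Finset.mem_univ, true_and] at hp
  obtain ⟨σ, τ⟩ := p
  simp only at hp ⊢
  rw [Finset.filter_filter]
  have hset : (Finset.univ.filter fun H : Fin n → (Fin l ×ₗ Fin k) =>
      Tuple.sort H = π ∧ fib H = (σ, τ)) =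
      Finset.univ.filter fun H => Tuple.sort (fun i => (ofLex (H i)).2) = σ ∧
        Tuple.sort ((fun i => (ofLex (H i)).1) ∘ σ) = τ := by
    ext H
    simp only [Finset.mem_filter, Finset.mem_univ, true_and]
    constructor
    · rintro ⟨hs, hfH⟩
      have h1 : (fib H).1 = σ := by rw [hfH]
      have h2 : (fib H).2 = τ := by rw [hfH]
      rw [hfib] at h1 h2
      simp only at h1 h2
      rw [h1] at h2
      exact ⟨h1, h2⟩
    · rintro ⟨h1, h2⟩
      have hfH : fib H = (σ, τ) := by
        rw [hfib]
        simp only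
        rw [h1]
        exact Prod.ext rfl h2
      refine ⟨?_, hfH⟩
      rw [hsortH H, hfH, hp]
  rw [hset]
  rw [← card_sort_eq hk σ, ← card_sort_eq hl τ, ← Finset.card_product]
  apply Finset.card_bij'
    (fun H _ => ((fun i => (ofLex (H i)).2), (fun i => (ofLex (H (σ i))).1)))
    (fun fg _ => fun i => toLex (fg.2 (σ⁻¹ i), fg.1 i))
  case hi =>
    intro H hH
    simp only [Finset.mem_filter, Finset.mem_univ, true_and] at hH
    rw [Finset.mem_product]
    simp only [Finset.mem_filter, Finset.mem_univ, true_and]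
    exact ⟨hH.1, hH.2⟩
  case hj =>
    intro fg hfg
    rw [Finset.mem_product] at hfg
    simp only [Finset.mem_filter, Finset.mem_univ, true_and] at hfg ⊢
    constructor
    · exact hfg.1
    · have hgg : ((fun i => (ofLex ((fun j => toLex (fg.2 (σ⁻¹ j), fg.1 j) : Fin n → Fin l ×ₗ Fin k) i)).1) ∘ σ) = fg.2 := by
        funext i
        simp
      rw [hgg]
      exact hfg.2
  case left_inv =>
    intro H _
    funext i
    change toLex ((ofLex (H (σ (σ⁻¹ i)))).1, (ofLex (H i)).2) = H i
    rw [show σ (σ⁻¹ i) = i from σ.apply_symm_apply i]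
    rfl
  case right_inv =>
    intro fg _
    apply Prod.ext
    · rfl
    · funext i; simp
end
end

section
/- The linear span in Q[B_n] of the elements E_{B,i} (the sum of all signed permutations of [n] with exactly i-1 type B descents, for i = 1,...,n+1) is a commutative subalgebra of Q[B_n] of dimension n+1. -/
open scoped Classical

noncomputable section

def IsSignedPerm (n : ℕ) (π : Equiv.Perm ℤ) : Prop :=
  (∀ i : ℤ, π (-i) = -π i) ∧ ∀ i : ℤ, (n : ℤ) < |i| → π i = i

def Bgroup (n : ℕ) : Subgroup (Equiv.Perm ℤ) where
  carrier := {π | IsSignedPerm n π}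
  one_mem' := ⟨fun i => by simp, fun i _ => rfl⟩
  mul_mem' := fun {a b} ha hb =>
    ⟨fun i => by simp only [Equiv.Perm.mul_apply, hb.1 i, ha.1 (b i)],
     fun i hi => by simp only [Equiv.Perm.mul_apply, hb.2 i hi, ha.2 i hi]⟩
  inv_mem' := fun {a} ha =>
    ⟨fun i => by rw [Equiv.Perm.inv_eq_iff_eq, ha.1]; simp,
     fun i hi => by rw [Equiv.Perm.inv_eq_iff_eq]; exact (ha.2 i hi).symm⟩

def desSetB (n : ℕ) (π : Equiv.Perm ℤ) : Finset ℕ :=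
  (Finset.range n).filter fun s => π ((s : ℤ) + 1) < π (s : ℤ)

def desB (n : ℕ) (π : Equiv.Perm ℤ) : ℕ := (desSetB n π).card

namespace Stmt4

variable (n : ℕ)

/-- the index window `[-n, n]`. -/
def II : Finset ℤ := Finset.Icc (-(n : ℤ)) n

lemma mem_II {j : ℤ} : j ∈ II n ↔ |j| ≤ (n : ℤ) := by
  simp [II, Finset.mem_Icc, abs_le]

lemma card_II : (II n).card = 2 * n + 1 := by
  rw [II, Int.card_Icc]
  omega

def IsWord (m : ℕ) (w : ℤ → ℤ) : Prop :=
  (∀ j, w (-j) = - w j) ∧ (∀ j, |w j| ≤ (m : ℤ)) ∧ ∀ j : ℤ, (n : ℤ) < |j| → w j = 0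

lemma IsWord.zero {m w} (h : IsWord n m w) : w 0 = 0 := by
  have := h.1 0; simp at this; omega

def key (w : ℤ → ℤ) (j : ℤ) : ℤ := (2 * n + 1) * w j + j

lemma key_lt_iff {w : ℤ → ℤ} {a b : ℤ} (ha : |a| ≤ (n : ℤ)) (hb : |b| ≤ (n : ℤ)) :
    key n w a < key n w b ↔ w a < w b ∨ (w a = w b ∧ a < b) := by
  rw [abs_le] at ha hb
  unfold key
  constructor
  · intro h
    by_cases h1 : w a < w b
    · exact Or.inl h1
    · push_neg at h1
      rcases eq_or_lt_of_le h1 with h2 | h2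
      · rw [h2] at h
        exact Or.inr ⟨h2.symm, by omega⟩
      · exfalso
        have h3 : 2*(n:ℤ)+1 ≤ (2*(n:ℤ)+1) * (w a - w b) :=
          le_mul_of_one_le_right (by positivity) (by omega)
        have h4 : (2*(n:ℤ)+1) * (w a - w b) = (2 * (n:ℤ) + 1) * w a - (2 * (n:ℤ) + 1) * w b := by
          ring
        omega
  · rintro (h1 | ⟨h1, h2⟩)
    · have h3 : 2*(n:ℤ)+1 ≤ (2*(n:ℤ)+1) * (w b - w a) :=
        le_mul_of_one_le_right (by positivity) (by omega)
      have h4 : (2*(n:ℤ)+1) * (w b - w a) = (2 * (n:ℤ) + 1) * w b - (2 * (n:ℤ) + 1) * w a := by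
        ring
      omega
    · rw [h1]; omega

lemma key_inj_on {w : ℤ → ℤ} {a b : ℤ} (ha : |a| ≤ (n : ℤ)) (hb : |b| ≤ (n : ℤ))
    (h : key n w a = key n w b) : a = b := by
  rcases lt_trichotomy a b with h1 | h1 | h1
  · exfalso
    have : key n w a < key n w b := by
      rcases lt_trichotomy (w a) (w b) with h2 | h2 | h2
      · exact (key_lt_iff n ha hb).2 (Or.inl h2)
      · exact (key_lt_iff n ha hb).2 (Or.inr ⟨h2, h1⟩)
      · have : key n w b < key n w a := (key_lt_iff n hb ha).2 (Or.inl h2)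
        omega
    omega
  · exact h1
  · exfalso
    have : key n w b < key n w a := by
      rcases lt_trichotomy (w b) (w a) with h2 | h2 | h2
      · exact (key_lt_iff n hb ha).2 (Or.inl h2)
      · exact (key_lt_iff n hb ha).2 (Or.inr ⟨h2, h1⟩)
      · have : key n w a < key n w b := (key_lt_iff n ha hb).2 (Or.inl h2)
        omega
    omega

lemma key_trichotomy {w : ℤ → ℤ} {a b : ℤ} (ha : |a| ≤ (n : ℤ)) (hb : |b| ≤ (n : ℤ))
    (hab : a ≠ b) : key n w a < key n w b ∨ key n w b < key n w a := by
  rcases lt_trichotomy (key n w a) (key n w b) with h | h | h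
  · exact Or.inl h
  · exact absurd (key_inj_on n ha hb h) hab
  · exact Or.inr h

lemma key_neg {w : ℤ → ℤ} (hw : ∀ j, w (-j) = - w j) (j : ℤ) :
    key n w (-j) = - key n w j := by
  simp only [key, hw]; ring

/-- the rank function: sends `j` in the window to (number of smaller keys) - n. -/
def rk (w : ℤ → ℤ) (j : ℤ) : ℤ :=
  if |j| ≤ (n : ℤ) then
    ((((II n).filter fun j' => key n w j' < key n w j).card : ℤ) - n) else j

lemma rk_of_in {w : ℤ → ℤ} {j : ℤ} (h : |j| ≤ (n : ℤ)) :
    rk n w j = ((((II n).filter fun j' => key n w j' < key n w j).card : ℤ) - n) := by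
  rw [rk, if_pos h]

lemma rk_of_out {w : ℤ → ℤ} {j : ℤ} (h : (n : ℤ) < |j|) : rk n w j = j := by
  rw [rk, if_neg (by omega)]

lemma rk_abs_le {w : ℤ → ℤ} {j : ℤ} (h : |j| ≤ (n : ℤ)) : |rk n w j| ≤ (n : ℤ) := by
  rw [rk, if_pos h]
  have hsub : ((II n).filter fun j' => key n w j' < key n w j) ⊆ (II n).erase j := by
    intro x hx
    rw [Finset.mem_filter] at hx
    rw [Finset.mem_erase]
    refine ⟨fun hxj => ?_, hx.1⟩
    subst hxj; omega
  have hcard : (((II n).filter fun j' => key n w j' < key n w j).card) ≤ 2 * n := by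
    have := Finset.card_le_card hsub
    rwa [Finset.card_erase_of_mem ((mem_II n).2 h), card_II] at this
  have : (0 : ℕ) ≤ (((II n).filter fun j' => key n w j' < key n w j).card) := Nat.zero_le _
  rw [abs_le]
  constructor <;> [skip; skip] <;> push_cast <;> omega

lemma rk_lt_of_key_lt {w : ℤ → ℤ} {a b : ℤ} (ha : |a| ≤ (n : ℤ)) (hb : |b| ≤ (n : ℤ))
    (h : key n w a < key n w b) : rk n w a < rk n w b := by
  rw [rk, if_pos ha, rk, if_pos hb]
  have hss : ((II n).filter fun j' => key n w j' < key n w a) ⊂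
      ((II n).filter fun j' => key n w j' < key n w b) := by
    constructor
    · intro x hx
      rw [Finset.mem_filter] at hx ⊢
      exact ⟨hx.1, lt_trans hx.2 h⟩
    · intro hsub
      have : a ∈ (II n).filter fun j' => key n w j' < key n w b :=
        Finset.mem_filter.2 ⟨(mem_II n).2 ha, h⟩
      have := hsub this
      rw [Finset.mem_filter] at this
      omega
  have := Finset.card_lt_card hss
  omega

lemma rk_injective (w : ℤ → ℤ) : Function.Injective (rk n w) := by
  intro a b h
  by_cases ha : |a| ≤ (n : ℤ) <;> by_cases hb : |b| ≤ (n : ℤ)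
  · by_contra hab
    rcases key_trichotomy n (w := w) ha hb hab with h1 | h1
    · have := rk_lt_of_key_lt n ha hb h1; omega
    · have := rk_lt_of_key_lt n hb ha h1; omega
  · exfalso
    have h1 := rk_abs_le n (w := w) ha
    rw [rk_of_out n (j := b) (by omega)] at h
    rw [h] at h1
    exact hb h1
  · exfalso
    have h1 := rk_abs_le n (w := w) hb
    rw [rk_of_out n (j := a) (by omega)] at h
    rw [← h] at h1
    exact ha h1
  · rwa [rk_of_out n (by omega), rk_of_out n (by omega)] at h

lemma rk_surjective (w : ℤ → ℤ) : Function.Surjective (rk n w) := by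
  intro y
  by_cases hy : |y| ≤ (n : ℤ)
  · -- image of II under rk equals II
    have himg : (II n).image (rk n w) = II n := by
      apply Finset.eq_of_subset_of_card_le
      · intro x hx
        rw [Finset.mem_image] at hx
        obtain ⟨a, ha, rfl⟩ := hx
        exact (mem_II n).2 (rk_abs_le n ((mem_II n).1 ha))
      · rw [Finset.card_image_of_injective _ (rk_injective n w)]
    have : y ∈ (II n).image (rk n w) := by rw [himg]; exact (mem_II n).2 hy
    rw [Finset.mem_image] at this
    obtain ⟨a, _, ha⟩ := this
    exact ⟨a, ha⟩
  · exact ⟨y, rk_of_out n (by omega)⟩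

lemma rk_bijective (w : ℤ → ℤ) : Function.Bijective (rk n w) :=
  ⟨rk_injective n w, rk_surjective n w⟩

/-- counting complement: #(keys < key j) + #(keys > key j) = 2n for j in window -/
lemma rk_neg {w : ℤ → ℤ} (hw : ∀ j, w (-j) = - w j) (j : ℤ) :
    rk n w (-j) = - rk n w j := by
  by_cases hj : |j| ≤ (n : ℤ)
  · have hnj : |(-j)| ≤ (n : ℤ) := by rwa [abs_neg]
    rw [rk_of_in n hnj, rk_of_in n hj]
    -- filter for -j is the image under Neg of the "greater" filter for j
    have himg : ((II n).filter fun j' => key n w j' < key n w (-j)) =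
        ((II n).filter fun j' => key n w j < key n w j').image (fun x => -x) := by
      ext x
      simp only [Finset.mem_filter, Finset.mem_image]
      constructor
      · intro ⟨hx1, hx2⟩
        refine ⟨-x, ⟨?_, ?_⟩, by ring⟩
        · rw [mem_II] at hx1 ⊢; rwa [abs_neg]
        · rw [key_neg n hw] at hx2
          have : key n w (-(-x)) = - key n w (-x) := key_neg n hw _
          simp at this
          omega
      · rintro ⟨a, ⟨ha1, ha2⟩, rfl⟩
        refine ⟨?_, ?_⟩
        · rw [mem_II] at ha1 ⊢; rwa [abs_neg]
        · rw [key_neg n hw, key_neg n hw]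
          omega
    rw [himg, Finset.card_image_of_injective _ neg_injective]
    -- partition: lt + gt + 1 = 2n+1
    have hpart : ((II n).filter fun j' => key n w j' < key n w j).card +
        ((II n).filter fun j' => key n w j < key n w j').card + 1 = 2 * n + 1 := by
      have hsplit := Finset.card_filter_add_card_filter_not
        (s := II n) (p := fun j' => key n w j' < key n w j)
      have heq : (II n).filter (fun j' => ¬ (key n w j' < key n w j)) =
          insert j ((II n).filter fun j' => key n w j < key n w j') := by
        ext x
        simp only [Finset.mem_filter, Finset.mem_insert, not_lt]
        constructor
        · intro ⟨hx1, hx2⟩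
          rcases eq_or_lt_of_le hx2 with h1 | h1
          · exact Or.inl (key_inj_on n hj ((mem_II n).1 hx1) h1).symm
          · exact Or.inr ⟨hx1, h1⟩
        · rintro (rfl | ⟨hx1, hx2⟩)
          · exact ⟨(mem_II n).2 hj, le_refl _⟩
          · exact ⟨hx1, le_of_lt hx2⟩
      rw [heq] at hsplit
      rw [Finset.card_insert_of_notMem (by
        simp only [Finset.mem_filter]
        push_neg
        intro _
        omega)] at hsplit
      rw [card_II] at hsplit
      omega
    omega
  · rw [rk_of_out n (j := -j) (by rw [abs_neg]; omega), rk_of_out n (by omega)]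

/-- The sorting signed permutation of a word. -/
def sortPerm (w : ℤ → ℤ) : Equiv.Perm ℤ :=
  (Equiv.ofBijective (rk n w) (rk_bijective n w)).symm

lemma rk_sortPerm (w : ℤ → ℤ) (k : ℤ) : rk n w (sortPerm n w k) = k :=
  (Equiv.ofBijective (rk n w) (rk_bijective n w)).apply_symm_apply k

lemma sortPerm_eq_iff {w : ℤ → ℤ} {j k : ℤ} : sortPerm n w k = j ↔ rk n w j = k := by
  constructor
  · rintro rfl; exact rk_sortPerm n w k
  · intro h
    have := rk_sortPerm n w k
    exact rk_injective n w (by rw [rk_sortPerm]; exact h.symm)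

lemma sortPerm_mem {m : ℕ} {w : ℤ → ℤ} (hw : IsWord n m w) : sortPerm n w ∈ Bgroup n := by
  constructor
  · intro i
    apply rk_injective n w
    rw [rk_sortPerm, rk_neg n hw.1, rk_sortPerm]
  · intro i hi
    rw [sortPerm_eq_iff]
    exact rk_of_out n hi

lemma B_zero_fix {π : Equiv.Perm ℤ} (h : π ∈ Bgroup n) : π 0 = 0 := by
  have := h.1 0; simp at this; omega

lemma B_abs_le {π : Equiv.Perm ℤ} (h : π ∈ Bgroup n) {i : ℤ} (hi : |i| ≤ (n : ℤ)) :
    |π i| ≤ (n : ℤ) := by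
  by_contra hc
  push_neg at hc
  have h2 : π (π i) = π i := h.2 _ hc
  have h3 := π.injective h2
  rw [h3] at hc
  omega

def Compat (w : ℤ → ℤ) (π : Equiv.Perm ℤ) : Prop :=
  ∀ k ∈ II n, ∀ k' ∈ II n, k < k' → key n w (π k) < key n w (π k')

lemma compat_sortPerm {m : ℕ} {w : ℤ → ℤ} (hw : IsWord n m w) :
    Compat n w (sortPerm n w) := by
  intro k hk k' hk' hlt
  rw [mem_II] at hk hk'
  have hmem := sortPerm_mem n hw
  have ha : |sortPerm n w k| ≤ (n : ℤ) := B_abs_le n hmem hk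
  have hb : |sortPerm n w k'| ≤ (n : ℤ) := B_abs_le n hmem hk'
  have hne : sortPerm n w k ≠ sortPerm n w k' := by
    intro h
    have := (sortPerm n w).injective h
    omega
  rcases key_trichotomy n ha hb hne with h | h
  · exact h
  · exfalso
    have := rk_lt_of_key_lt n hb ha h
    rw [rk_sortPerm, rk_sortPerm] at this
    omega

lemma rk_of_compat {w : ℤ → ℤ} {π : Equiv.Perm ℤ} (hπ : π ∈ Bgroup n)
    (hc : Compat n w π) {k : ℤ} (hk : |k| ≤ (n : ℤ)) : rk n w (π k) = k := by
  have hπk : |π k| ≤ (n : ℤ) := B_abs_le n hπ hk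
  rw [rk, if_pos hπk]
  have hbij : ((II n).filter fun j' => key n w j' < key n w (π k)) =
      ((II n).filter fun k' => k' < k).image π := by
    ext x
    simp only [Finset.mem_filter, Finset.mem_image]
    constructor
    · intro ⟨hx1, hx2⟩
      refine ⟨π.symm x, ⟨?_, ?_⟩, by simp⟩
      · rw [mem_II] at hx1 ⊢
        exact B_abs_le n (Subgroup.inv_mem _ hπ) hx1
      · by_contra hge
        push_neg at hge
        rcases eq_or_lt_of_le hge with h1 | h1
        · rw [h1] at hx2; simp at hx2
        · have hm1 : |π.symm x| ≤ (n : ℤ) := B_abs_le n (Subgroup.inv_mem _ hπ) ((mem_II n).1 hx1)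
          have h2 := hc k ((mem_II n).2 hk) (π.symm x) ((mem_II n).2 hm1) h1
          rw [Equiv.apply_symm_apply] at h2
          omega
    · rintro ⟨a, ⟨ha1, ha2⟩, rfl⟩
      refine ⟨(mem_II n).2 (B_abs_le n hπ ((mem_II n).1 ha1)), ?_⟩
      exact hc a ha1 k ((mem_II n).2 hk) ha2
  rw [hbij, Finset.card_image_of_injective _ π.injective]
  have hk2 := abs_le.1 hk
  have : (II n).filter (fun k' => k' < k) = Finset.Ico (-(n : ℤ)) k := by
    ext x
    simp only [Finset.mem_filter, Finset.mem_Ico, mem_II, abs_le, II, Finset.mem_Icc]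
    omega
  rw [this, Int.card_Ico]
  have hk2 := abs_le.1 hk
  omega

lemma compat_unique {m : ℕ} {w : ℤ → ℤ} (hw : IsWord n m w) {π π' : Equiv.Perm ℤ}
    (hπ : π ∈ Bgroup n) (hπ' : π' ∈ Bgroup n)
    (hc : Compat n w π) (hc' : Compat n w π') : π = π' := by
  ext j
  by_cases hj : |j| ≤ (n : ℤ)
  · apply rk_injective n w
    rw [rk_of_compat n hπ hc hj, rk_of_compat n hπ' hc' hj]
  · rw [hπ.2 j (by omega), hπ'.2 j (by omega)]

lemma compat_sortPerm_unique {m : ℕ} {w : ℤ → ℤ} (hw : IsWord n m w) {π : Equiv.Perm ℤ}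
    (hπ : π ∈ Bgroup n) (hc : Compat n w π) : π = sortPerm n w :=
  compat_unique n hw hπ (sortPerm_mem n hw) hc (compat_sortPerm n hw)

/-! ### Finiteness of the group -/

instance BgroupFinite : Finite ↥(Bgroup n) := by
  have hF : Function.Injective (fun (π : ↥(Bgroup n)) =>
      (fun k : {x // x ∈ II n} => (⟨π.1 k.1,
        (mem_II n).2 (B_abs_le n π.2 ((mem_II n).1 k.2))⟩ : {x // x ∈ II n}))) := by
    intro π π' h
    ext j
    by_cases hj : |j| ≤ (n : ℤ)
    · have := congrFun h ⟨j, (mem_II n).2 hj⟩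
      exact congrArg Subtype.val this
    · rw [π.2.2 j (by omega), π'.2.2 j (by omega)]
  exact Finite.of_injective _ hF

noncomputable instance : Fintype ↥(Bgroup n) := Fintype.ofFinite _

/-! ### From consecutive comparisons to full compatibility -/

lemma B_inv_odd {π : Equiv.Perm ℤ} (hπ : π ∈ Bgroup n) (j : ℤ) :
    π.symm (-j) = - π.symm j := by
  have := (Subgroup.inv_mem (Bgroup n) hπ)
  exact this.1 j

lemma compat_of_consec {m : ℕ} {w : ℤ → ℤ} {π : Equiv.Perm ℤ} (hw : IsWord n m w)
    (hπ : π ∈ Bgroup n)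
    (h : ∀ i : ℕ, i < n → key n w (π (i : ℤ)) < key n w (π ((i : ℤ) + 1))) :
    Compat n w π := by
  have hK0 : key n w (π 0) = 0 := by
    rw [B_zero_fix n hπ, key, IsWord.zero n hw]
    ring
  have hKneg : ∀ k : ℤ, key n w (π (-k)) = - key n w (π k) := by
    intro k
    rw [hπ.1 k, key_neg n hw.1]
  have hchain : ∀ b : ℕ, b ≤ n → ∀ a : ℕ, a < b →
      key n w (π (a : ℤ)) < key n w (π (b : ℤ)) := by
    intro b
    induction b with
    | zero => omega
    | succ c ih =>
      intro hb a ha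
      have hstep : key n w (π (c : ℤ)) < key n w (π ((c : ℤ) + 1)) := h c (by omega)
      have hcast : ((c + 1 : ℕ) : ℤ) = (c : ℤ) + 1 := by push_cast; ring
      rw [hcast]
      rcases Nat.lt_or_ge a c with h1 | h1
      · exact lt_trans (ih (by omega) a h1) hstep
      · have : a = c := by omega
        subst this
        exact hstep
  -- full version on ℤ
  have hfull : ∀ a b : ℤ, -(n : ℤ) ≤ a → a < b → b ≤ (n : ℤ) →
      key n w (π a) < key n w (π b) := by
    intro a b hna hab hbn
    rcases le_or_gt 0 a with ha0 | ha0
    · -- 0 ≤ a < b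
      have h1 : a = ((a.toNat : ℕ) : ℤ) := by omega
      have h2 : b = ((b.toNat : ℕ) : ℤ) := by omega
      rw [h1, h2]
      exact hchain b.toNat (by omega) a.toNat (by omega)
    · rcases le_or_gt b 0 with hb0 | hb0
      · -- a < b ≤ 0
        have h2 : ((-a).toNat : ℤ) = -a := by omega
        have h3 : ((-b).toNat : ℤ) = -b := by omega
        have h4 := hchain (-a).toNat (by omega) (-b).toNat (by omega)
        rw [h2, h3] at h4
        have h5 := hKneg (-a)
        have h6 := hKneg (-b)
        simp only [neg_neg] at h5 h6
        omega
      · -- a < 0 < b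
        have hKa : key n w (π a) < 0 := by
          have h1 : key n w (π (-(-a))) = - key n w (π (-a)) := hKneg (-a)
          simp only [neg_neg] at h1
          have h2 : ((-a).toNat : ℤ) = -a := by omega
          have h3 : 0 < key n w (π (-a)) := by
            have := hchain (-a).toNat (by omega) 0 (by omega)
            rw [h2] at this
            simp only [Nat.cast_zero] at this
            rw [hK0] at this
            exact this
          omega
        have hKb : 0 < key n w (π b) := by
          have h2 : ((b).toNat : ℤ) = b := by omega
          have := hchain b.toNat (by omega) 0 (by omega)
          rw [h2] at this
          simp only [Nat.cast_zero] at this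
          rw [hK0] at this
          exact this
        omega
  intro k hk k' hk' hlt
  rw [mem_II, abs_le] at hk hk'
  exact hfull k k' hk.1 hlt hk'.2

/-! ### Descents and the counting function -/

lemma mem_desSetB {π : Equiv.Perm ℤ} {i : ℕ} :
    i ∈ desSetB n π ↔ i < n ∧ π ((i : ℤ) + 1) < π (i : ℤ) := by
  simp [desSetB, Finset.mem_filter, Finset.mem_range]

lemma desB_le (π : Equiv.Perm ℤ) : desB n π ≤ n := by
  rw [desB]
  calc (desSetB n π).card ≤ (Finset.range n).card := Finset.card_le_card (Finset.filter_subset _ _)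
    _ = n := Finset.card_range n

/-- number of descents strictly below `i` -/
def cc (π : Equiv.Perm ℤ) (i : ℕ) : ℤ := (((desSetB n π).filter (fun s => s < i)).card : ℤ)

lemma cc_zero (π : Equiv.Perm ℤ) : cc n π 0 = 0 := by
  rw [cc]
  have h : (desSetB n π).filter (fun s => s < 0) = ∅ :=
    Finset.filter_false_of_mem (fun x _ => by omega)
  rw [h]
  simp

lemma cc_succ (π : Equiv.Perm ℤ) (i : ℕ) :
    cc n π (i + 1) = cc n π i + (if i ∈ desSetB n π then 1 else 0) := by
  rw [cc, cc]
  by_cases hi : i ∈ desSetB n π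
  · rw [if_pos hi]
    have heq : (desSetB n π).filter (fun s => s < i + 1) =
        insert i ((desSetB n π).filter (fun s => s < i)) := by
      ext x
      simp only [Finset.mem_filter, Finset.mem_insert]
      constructor
      · rintro ⟨hx1, hx2⟩
        rcases Nat.lt_or_ge x i with h1 | h1
        · exact Or.inr ⟨hx1, h1⟩
        · exact Or.inl (by omega)
      · rintro (rfl | ⟨hx1, hx2⟩)
        · exact ⟨hi, by omega⟩
        · exact ⟨hx1, by omega⟩
    rw [heq, Finset.card_insert_of_notMem (by
      simp only [Finset.mem_filter]
      push_neg
      intro _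
      omega)]
    push_cast
    ring
  · rw [if_neg hi]
    have heq : (desSetB n π).filter (fun s => s < i + 1) =
        (desSetB n π).filter (fun s => s < i) := by
      ext x
      simp only [Finset.mem_filter]
      constructor
      · rintro ⟨hx1, hx2⟩
        refine ⟨hx1, ?_⟩
        rcases Nat.lt_or_ge x i with h1 | h1
        · exact h1
        · exfalso; have : x = i := by omega
          subst this; exact hi hx1
      · rintro ⟨hx1, hx2⟩
        exact ⟨hx1, by omega⟩
    rw [heq]
    ring
  
lemma cc_nonneg (π : Equiv.Perm ℤ) (i : ℕ) : 0 ≤ cc n π i := Int.natCast_nonneg _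

lemma cc_le_desB (π : Equiv.Perm ℤ) (i : ℕ) : cc n π i ≤ (desB n π : ℤ) := by
  rw [cc, desB]
  have := Finset.card_le_card (Finset.filter_subset (fun s => s < i) (desSetB n π))
  exact_mod_cast this

lemma cc_n (π : Equiv.Perm ℤ) : cc n π n = (desB n π : ℤ) := by
  rw [cc, desB]
  congr 2
  apply Finset.filter_true_of_mem
  intro x hx
  have := (mem_desSetB n).1 hx
  omega

/-! ### The space of monotone sequences -/

def Yfree (r : ℕ) : Type :=
  {y : ℕ → ℤ // y 0 = 0 ∧ (∀ i, i < n → y i ≤ y (i + 1)) ∧ y n ≤ (r : ℤ) ∧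
    ∀ i, n < i → y i = 0}

lemma Yfree_mono {r : ℕ} (y : Yfree n r) : ∀ a b : ℕ, a ≤ b → b ≤ n → y.1 a ≤ y.1 b := by
  intro a b
  induction b with
  | zero =>
    intro hab _
    have h0 : a = 0 := by omega
    rw [h0]
  | succ c ih =>
    intro hab hbn
    rcases Nat.lt_or_ge a (c + 1) with h1 | h1
    · have h2 := y.2.2.1 c (by omega)
      have h3 : y.1 a ≤ y.1 c := ih (by omega) (by omega)
      omega
    · have h0 : a = c + 1 := by omega
      rw [h0]

lemma Yfree_nonneg {r : ℕ} (y : Yfree n r) {i : ℕ} (hi : i ≤ n) : 0 ≤ y.1 i := by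
  have := Yfree_mono n y 0 i (by omega) hi
  rw [y.2.1] at this
  exact this

instance Yfree_finite (r : ℕ) : Finite (Yfree n r) := by
  have hF : Function.Injective (fun (y : Yfree n r) =>
      (fun i : {x // x ∈ Finset.range (n+1)} =>
        (⟨y.1 i.1, by
          rw [Finset.mem_Icc]
          have hin : i.1 ≤ n := by have := Finset.mem_range.1 i.2; omega
          exact ⟨Yfree_nonneg n y hin, le_trans (Yfree_mono n y i.1 n hin (le_refl n)) y.2.2.2.1⟩⟩ :
          {x // x ∈ Finset.Icc (0:ℤ) r}))) := by
    intro y y' h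
    apply Subtype.ext
    funext i
    rcases Nat.lt_or_ge i (n+1) with h1 | h1
    · have := congrFun h ⟨i, Finset.mem_range.2 h1⟩
      exact congrArg Subtype.val this
    · rw [y.2.2.2.2 i (by omega), y'.2.2.2.2 i (by omega)]
  exact Finite.of_injective _ hF

lemma Yfree_zero_card : Nat.card (Yfree n 0) = 1 := by
  rw [Nat.card_eq_one_iff_unique]
  constructor
  · constructor
    intro y y'
    apply Subtype.ext
    funext i
    rcases Nat.lt_or_ge n i with h1 | h1
    · rw [y.2.2.2.2 i h1, y'.2.2.2.2 i h1]
    · have ha : ∀ z : Yfree n 0, z.1 i = 0 := by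
        intro z
        have h2 := Yfree_nonneg n z h1
        have h3 := Yfree_mono n z i n h1 (le_refl n)
        have h4 := z.2.2.2.1
        simp only [Nat.cast_zero] at h4
        omega
      rw [ha y, ha y']
  · exact ⟨⟨fun _ => 0, by norm_num⟩⟩

/-! ### Fibers of the sorting map -/

def Fib (m : ℕ) (π : Equiv.Perm ℤ) : Type :=
  {w : ℤ → ℤ // IsWord n m w ∧ Compat n w π}

lemma compat_step {m : ℕ} {w : ℤ → ℤ} {π : Equiv.Perm ℤ} (hw : IsWord n m w)
    (hπ : π ∈ Bgroup n) (hc : Compat n w π) {i : ℕ} (hi : i < n) :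
    w (π (i : ℤ)) < w (π ((i : ℤ) + 1)) ∨
      (w (π (i : ℤ)) = w (π ((i : ℤ) + 1)) ∧ π (i : ℤ) < π ((i : ℤ) + 1)) := by
  have h1 : (i : ℤ) ∈ II n := (mem_II n).2 (by rw [abs_le]; omega)
  have h2 : (i : ℤ) + 1 ∈ II n := (mem_II n).2 (by rw [abs_le]; omega)
  have h := hc (i : ℤ) h1 ((i : ℤ) + 1) h2 (by omega)
  exact (key_lt_iff n (B_abs_le n hπ ((mem_II n).1 h1)) (B_abs_le n hπ ((mem_II n).1 h2))).1 h

lemma w_pi_lower {m : ℕ} {w : ℤ → ℤ} {π : Equiv.Perm ℤ} (hw : IsWord n m w)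
    (hπ : π ∈ Bgroup n) (hc : Compat n w π) :
    ∀ i : ℕ, i ≤ n → cc n π i ≤ w (π (i : ℤ)) := by
  intro i
  induction i with
  | zero =>
    intro _
    rw [cc_zero]
    simp only [Nat.cast_zero]
    rw [B_zero_fix n hπ, IsWord.zero n hw]
  | succ c ih =>
    intro hc1
    have hstep := compat_step n hw hπ hc (i := c) (by omega)
    have hcast : ((c + 1 : ℕ) : ℤ) = (c : ℤ) + 1 := by push_cast; ring
    rw [hcast, cc_succ]
    by_cases hd : c ∈ desSetB n π
    · rw [if_pos hd]
      have hdes := ((mem_desSetB n).1 hd).2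
      rcases hstep with h1 | ⟨h1, h2⟩
      · have := ih (by omega)
        omega
      · omega
    · rw [if_neg hd]
      have hdes : ¬ (π ((c : ℤ) + 1) < π (c : ℤ)) := by
        intro hcon
        exact hd ((mem_desSetB n).2 ⟨by omega, hcon⟩)
      have := ih (by omega)
      rcases hstep with h1 | ⟨h1, h2⟩ <;> omega

lemma fib_isEmpty {m : ℕ} {π : Equiv.Perm ℤ} (hπ : π ∈ Bgroup n)
    (h : m < desB n π) : IsEmpty (Fib n m π) := by
  constructor
  intro w
  have h1 := w_pi_lower n w.2.1 hπ w.2.2 n (le_refl n)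
  rw [cc_n] at h1
  have h2 := w.2.1.2.1 (π (n : ℤ))
  rw [abs_le] at h2
  omega

/-! ### The fiber equivalence -/

def auxv (π : Equiv.Perm ℤ) (y : ℕ → ℤ) (k : ℤ) : ℤ :=
  if 0 ≤ k then y k.toNat + cc n π k.toNat else -(y (-k).toNat + cc n π (-k).toNat)

lemma auxv_nat (π : Equiv.Perm ℤ) (y : ℕ → ℤ) (i : ℕ) :
    auxv n π y (i : ℤ) = y i + cc n π i := by
  rw [auxv, if_pos (by omega)]
  simp

lemma auxv_neg (π : Equiv.Perm ℤ) (y : ℕ → ℤ) (hy0 : y 0 = 0) (k : ℤ) :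
    auxv n π y (-k) = - auxv n π y k := by
  rcases lt_trichotomy k 0 with h | h | h
  · rw [auxv, if_pos (by omega), auxv, if_neg (by omega)]
    simp
  · subst h
    simp [auxv, hy0, cc_zero]
  · rw [auxv, if_neg (by omega), auxv, if_pos (by omega)]
    simp

def wOf (π : Equiv.Perm ℤ) (y : ℕ → ℤ) (j : ℤ) : ℤ :=
  if |j| ≤ (n : ℤ) then auxv n π y (π.symm j) else 0

lemma wOf_pi {π : Equiv.Perm ℤ} (hπ : π ∈ Bgroup n) (y : ℕ → ℤ) (i : ℕ) (hi : i ≤ n) :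
    wOf n π y (π (i : ℤ)) = y i + cc n π i := by
  rw [wOf, if_pos (B_abs_le n hπ (by rw [abs_le]; omega)), Equiv.symm_apply_apply]
  exact auxv_nat n π y i

lemma wOf_isWord {m : ℕ} {π : Equiv.Perm ℤ} (hπ : π ∈ Bgroup n) (hd : desB n π ≤ m)
    (y : Yfree n (m - desB n π)) : IsWord n m (wOf n π y.1) := by
  have habs : ∀ k' : ℤ, 0 ≤ k' → k' ≤ (n : ℤ) → |auxv n π y.1 k'| ≤ (m : ℤ) := by
    intro k' h0 hn'
    rw [auxv, if_pos h0, abs_le]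
    have h1 : k'.toNat ≤ n := by omega
    have h2 := Yfree_nonneg n y h1
    have h3 := Yfree_mono n y k'.toNat n h1 (le_refl n)
    have h4 := y.2.2.2.1
    have h5 := cc_nonneg n π k'.toNat
    have h6 := cc_le_desB n π k'.toNat
    constructor <;> omega
  refine ⟨?_, ?_, ?_⟩
  · intro j
    by_cases hj : |j| ≤ (n : ℤ)
    · rw [wOf, if_pos (by rw [abs_neg]; exact hj), wOf, if_pos hj, B_inv_odd n hπ,
        auxv_neg n π y.1 y.2.1]
    · rw [wOf, if_neg (by rw [abs_neg]; exact hj), wOf, if_neg hj]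
      ring
  · intro j
    by_cases hj : |j| ≤ (n : ℤ)
    · rw [wOf, if_pos hj]
      have hk : |π.symm j| ≤ (n : ℤ) := B_abs_le n (Subgroup.inv_mem _ hπ) hj
      by_cases h0 : 0 ≤ π.symm j
      · exact habs _ h0 (abs_le.1 hk).2
      · have h1 : auxv n π y.1 (-(- π.symm j)) = - auxv n π y.1 (- π.symm j) :=
          auxv_neg n π y.1 y.2.1 _
        rw [neg_neg] at h1
        rw [h1, abs_neg]
        exact habs _ (by omega) (by have := (abs_le.1 hk).1; omega)
    · rw [wOf, if_neg hj]
      simp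
  · intro j hj
    rw [wOf, if_neg (by omega)]

lemma wOf_compat {m : ℕ} {π : Equiv.Perm ℤ} (hπ : π ∈ Bgroup n) (hd : desB n π ≤ m)
    (y : Yfree n (m - desB n π)) : Compat n (wOf n π y.1) π := by
  apply compat_of_consec n (wOf_isWord n hπ hd y) hπ
  intro i hi
  have hv1 : wOf n π y.1 (π (i : ℤ)) = y.1 i + cc n π i := wOf_pi n hπ y.1 i (by omega)
  have hv2 : wOf n π y.1 (π ((i : ℤ) + 1)) = y.1 (i + 1) + cc n π (i + 1) := by
    have hcast : ((i + 1 : ℕ) : ℤ) = (i : ℤ) + 1 := by push_cast; ring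
    rw [← hcast]
    exact wOf_pi n hπ y.1 (i + 1) (by omega)
  have hb1 : |(i : ℤ)| ≤ (n : ℤ) := by rw [abs_le]; omega
  have hb2 : |(i : ℤ) + 1| ≤ (n : ℤ) := by rw [abs_le]; omega
  apply (key_lt_iff n (B_abs_le n hπ hb1) (B_abs_le n hπ hb2)).2
  rw [hv1, hv2, cc_succ]
  have hstep := y.2.2.1 i hi
  by_cases hdes : i ∈ desSetB n π
  · left
    rw [if_pos hdes]
    omega
  · rw [if_neg hdes]
    rcases eq_or_lt_of_le hstep with h1 | h1
    · right
      have hne : π ((i : ℤ)) ≠ π ((i : ℤ) + 1) := by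
        intro hcon
        have := π.injective hcon
        omega
      have hnd : ¬ (π ((i : ℤ) + 1) < π (i : ℤ)) := by
        intro hcon
        exact hdes ((mem_desSetB n).2 ⟨hi, hcon⟩)
      constructor
      · omega
      · omega
    · left
      omega

def fibEquiv {m : ℕ} {π : Equiv.Perm ℤ} (hπ : π ∈ Bgroup n) (hd : desB n π ≤ m) :
    Fib n m π ≃ Yfree n (m - desB n π) where
  toFun w := ⟨fun i => if i ≤ n then w.1 (π (i : ℤ)) - cc n π i else 0, by
    refine ⟨?_, ?_, ?_, ?_⟩
    · dsimp only
      rw [if_pos (Nat.zero_le n)]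
      have h0 : ((0 : ℕ) : ℤ) = 0 := rfl
      rw [h0, cc_zero, B_zero_fix n hπ, IsWord.zero n w.2.1]
      ring
    · intro i hi
      dsimp only
      rw [if_pos (by omega : i ≤ n), if_pos (by omega : i + 1 ≤ n)]
      have hstep := compat_step n w.2.1 hπ w.2.2 (i := i) hi
      have hcast : ((i + 1 : ℕ) : ℤ) = (i : ℤ) + 1 := by push_cast; ring
      rw [hcast, cc_succ]
      by_cases hdes : i ∈ desSetB n π
      · rw [if_pos hdes]
        have hd2 := ((mem_desSetB n).1 hdes).2
        rcases hstep with h1 | ⟨h1, h2⟩ <;> omega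
      · rw [if_neg hdes]
        rcases hstep with h1 | ⟨h1, h2⟩ <;> omega
    · dsimp only
      rw [if_pos (le_refl n), cc_n]
      have hb := w.2.1.2.1 (π (n : ℤ))
      rw [abs_le] at hb
      omega
    · intro i hi
      dsimp only
      rw [if_neg (by omega)]⟩
  invFun y := ⟨wOf n π y.1, wOf_isWord n hπ hd y, wOf_compat n hπ hd y⟩
  left_inv w := by
    apply Subtype.ext
    funext j
    dsimp only
    by_cases hj : |j| ≤ (n : ℤ)
    · rw [wOf, if_pos hj]
      have hkb : |π.symm j| ≤ (n : ℤ) := B_abs_le n (Subgroup.inv_mem _ hπ) hj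
      have hkb2 := abs_le.1 hkb
      by_cases h0 : 0 ≤ π.symm j
      · rw [auxv, if_pos h0]
        rw [if_pos (by omega : (π.symm j).toNat ≤ n)]
        have h2 : (((π.symm j).toNat : ℕ) : ℤ) = π.symm j := by omega
        rw [h2, Equiv.apply_symm_apply]
        ring
      · rw [auxv, if_neg h0]
        rw [if_pos (by omega : ((- π.symm j).toNat ≤ n))]
        have h2 : (((- π.symm j).toNat : ℕ) : ℤ) = - π.symm j := by omega
        rw [h2]
        have h3 : π (- π.symm j) = - j := by
          rw [hπ.1, Equiv.apply_symm_apply]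
        rw [h3, w.2.1.1 j]
        ring
    · rw [wOf, if_neg hj, w.2.1.2.2 j (by omega)]
  right_inv y := by
    apply Subtype.ext
    funext i
    by_cases hi : i ≤ n
    · dsimp only
      rw [if_pos hi, wOf_pi n hπ y.1 i hi]
      ring
    · dsimp only
      rw [if_neg hi]
      exact (y.2.2.2.2 i (by omega)).symm

/-! ### The product bijection -/

lemma compat_reflect {w : ℤ → ℤ} {σ : Equiv.Perm ℤ} (hσ : σ ∈ Bgroup n)
    (hc : Compat n w σ) {x x' : ℤ} (hx : x ∈ II n) (hx' : x' ∈ II n)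
    (h : key n w x < key n w x') : σ.symm x < σ.symm x' := by
  have hmx : σ.symm x ∈ II n := by
    rw [mem_II]
    exact B_abs_le n (Subgroup.inv_mem _ hσ) ((mem_II n).1 hx)
  have hmx' : σ.symm x' ∈ II n := by
    rw [mem_II]
    exact B_abs_le n (Subgroup.inv_mem _ hσ) ((mem_II n).1 hx')
  rcases lt_trichotomy (σ.symm x) (σ.symm x') with h1 | h1 | h1
  · exact h1
  · exfalso
    have : x = x' := by
      have := congrArg σ h1
      simpa using this
    subst this
    omega
  · exfalso
    have h2 := hc _ hmx' _ hmx h1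
    rw [Equiv.apply_symm_apply, Equiv.apply_symm_apply] at h2
    omega

section ProdBij

variable {l m : ℕ} {z : ℤ → ℤ}

/-- low digit -/
def bq (l : ℕ) (z : ℤ → ℤ) (x : ℤ) : ℤ := (z x + l) % (2 * l + 1) - l
/-- high digit -/
def aq (l : ℕ) (z : ℤ → ℤ) (x : ℤ) : ℤ := (z x + l) / (2 * l + 1)

lemma q_pos (l : ℕ) : (0 : ℤ) < 2 * l + 1 := by positivity

lemma bq_decomp (l : ℕ) (z : ℤ → ℤ) (x : ℤ) :
    z x = (2 * l + 1) * aq l z x + bq l z x := by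
  have := Int.mul_ediv_add_emod (z x + l) (2 * l + 1)
  rw [bq, aq]
  omega

lemma bq_bound (l : ℕ) (z : ℤ → ℤ) (x : ℤ) : |bq l z x| ≤ (l : ℤ) := by
  have h1 := Int.emod_nonneg (z x + l) (by omega : (2 * (l:ℤ) + 1) ≠ 0)
  have h2 := Int.emod_lt_of_pos (z x + l) (q_pos l)
  rw [bq, abs_le]
  omega

lemma bq_neg (l : ℕ) {z : ℤ → ℤ} (hodd : ∀ j, z (-j) = - z j) (x : ℤ) :
    bq l z (-x) = - bq l z x := by
  have h1 := Int.emod_nonneg (z x + l) (by omega : (2 * (l:ℤ) + 1) ≠ 0)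
  have h2 := Int.emod_lt_of_pos (z x + l) (q_pos l)
  have hrw : z (-x) + l = (2 * l - (z x + l) % (2 * l + 1)) +
      (2 * l + 1) * (-(aq l z x) ) := by
    have h3 := Int.mul_ediv_add_emod (z x + l) (2 * l + 1)
    have h4 : (2 * (l:ℤ) + 1) * (-((z x + (l:ℤ)) / (2 * (l:ℤ) + 1))) =
        -((2 * (l:ℤ) + 1) * ((z x + (l:ℤ)) / (2 * (l:ℤ) + 1))) := by ring
    rw [hodd x, aq]
    omega
  rw [bq, hrw, Int.add_mul_emod_self_left, Int.emod_eq_of_lt (by omega) (by omega)]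
  rw [bq]
  omega

lemma aq_neg (l : ℕ) {z : ℤ → ℤ} (hodd : ∀ j, z (-j) = - z j) (x : ℤ) :
    aq l z (-x) = - aq l z x := by
  have h1 := bq_decomp l z (-x)
  have h2 := bq_decomp l z x
  rw [hodd x, bq_neg l hodd x] at h1
  have h3 : (2 * (l:ℤ) + 1) * aq l z (-x) = (2 * (l:ℤ) + 1) * (- aq l z x) := by ring_nf; ring_nf at h1 h2; omega
  exact mul_left_cancel₀ (by omega : (2 * (l:ℤ) + 1) ≠ 0) h3

lemma bq_support (l : ℕ) {z : ℤ → ℤ} {x : ℤ} (h : z x = 0) : bq l z x = 0 := by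
  rw [bq, h]
  rw [Int.emod_eq_of_lt (by omega) (by omega)]
  omega

lemma aq_support (l : ℕ) {z : ℤ → ℤ} {x : ℤ} (h : z x = 0) : aq l z x = 0 := by
  rw [aq, h]
  have : (0 : ℤ) + l = l := by omega
  rw [this]
  apply Int.ediv_eq_zero_of_lt (by omega) (by omega)

lemma aq_bound {l m : ℕ} {z : ℤ → ℤ} (hz : ∀ x, |z x| ≤ ((2 * l + 1) * m + l : ℕ)) (x : ℤ) :
    |aq l z x| ≤ (m : ℤ) := by
  have h1 := bq_decomp l z x
  have h2 := bq_bound l z x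
  have h3 := hz x
  rw [abs_le] at h2 h3 ⊢
  push_cast at h3
  constructor
  · by_contra hcon
    push_neg at hcon
    have h4 : aq l z x ≤ -(m:ℤ) - 1 := by omega
    have h5 : (2*(l:ℤ)+1) * aq l z x ≤ (2*(l:ℤ)+1) * (-(m:ℤ) - 1) :=
      mul_le_mul_of_nonneg_left h4 (by omega)
    have h6 : (2*(l:ℤ)+1) * (-(m:ℤ) - 1) = -((2*(l:ℤ)+1) * m) - (2*l+1) := by ring
    have h7 : (2*(l:ℤ)+1) * (m:ℤ) = (2*l+1) * m := by ring
    omega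
  · by_contra hcon
    push_neg at hcon
    have h4 : (m:ℤ) + 1 ≤ aq l z x := by omega
    have h5 : (2*(l:ℤ)+1) * ((m:ℤ) + 1) ≤ (2*(l:ℤ)+1) * aq l z x :=
      mul_le_mul_of_nonneg_left h4 (by omega)
    have h6 : (2*(l:ℤ)+1) * ((m:ℤ) + 1) = (2*(l:ℤ)+1) * m + (2*l+1) := by ring
    omega

/-- digit comparison: if `z x ≤ z x'` then high digits compare. -/
lemma aq_mono {l : ℕ} {z : ℤ → ℤ} {x x' : ℤ} (h : z x < z x') : aq l z x ≤ aq l z x' := by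
  by_contra hcon
  push_neg at hcon
  have h4 : aq l z x' + 1 ≤ aq l z x := by omega
  have h5 : (2*(l:ℤ)+1) * (aq l z x' + 1) ≤ (2*(l:ℤ)+1) * aq l z x :=
    mul_le_mul_of_nonneg_left h4 (by omega)
  have h1 := bq_decomp l z x
  have h2 := bq_decomp l z x'
  have hb1 := bq_bound l z x
  have hb2 := bq_bound l z x'
  rw [abs_le] at hb1 hb2
  have h6 : (2*(l:ℤ)+1) * (aq l z x' + 1) = (2*(l:ℤ)+1) * aq l z x' + (2*l+1) := by ring
  omega

lemma aq_eq_of_eq {l : ℕ} {z : ℤ → ℤ} {x x' : ℤ} (h : z x = z x') :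
    aq l z x = aq l z x' ∧ bq l z x = bq l z x' := by
  have h1 := bq_decomp l z x
  have h2 := bq_decomp l z x'
  have hb1 := bq_bound l z x
  have hb2 := bq_bound l z x'
  rw [abs_le] at hb1 hb2
  have key : aq l z x = aq l z x' := by
    by_contra hcon
    rcases lt_or_gt_of_ne hcon with h3 | h3
    · have h4 : aq l z x + 1 ≤ aq l z x' := by omega
      have h5 : (2*(l:ℤ)+1) * (aq l z x + 1) ≤ (2*(l:ℤ)+1) * aq l z x' :=
        mul_le_mul_of_nonneg_left h4 (by omega)
      have h6 : (2*(l:ℤ)+1) * (aq l z x + 1) = (2*(l:ℤ)+1) * aq l z x + (2*l+1) := by ring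
      omega
    · have h4 : aq l z x' + 1 ≤ aq l z x := by omega
      have h5 : (2*(l:ℤ)+1) * (aq l z x' + 1) ≤ (2*(l:ℤ)+1) * aq l z x :=
        mul_le_mul_of_nonneg_left h4 (by omega)
      have h6 : (2*(l:ℤ)+1) * (aq l z x' + 1) = (2*(l:ℤ)+1) * aq l z x' + (2*l+1) := by ring
      omega
  refine ⟨key, ?_⟩
  have : (2*(l:ℤ)+1) * aq l z x = (2*(l:ℤ)+1) * aq l z x' := by rw [key]
  omega

lemma bq_isWord {l m : ℕ} {z : ℤ → ℤ} (hz : IsWord n ((2 * l + 1) * m + l) z) :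
    IsWord n l (bq l z) :=
  ⟨fun j => bq_neg l hz.1 j, fun j => bq_bound l z j, fun j hj => bq_support l (hz.2.2 j hj)⟩

end ProdBij

/-! ### The composed word -/

def zOf (l : ℕ) (σ : Equiv.Perm ℤ) (u v : ℤ → ℤ) (x : ℤ) : ℤ :=
  (2 * l + 1) * u (σ.symm x) + v x

lemma B_inv_fix {σ : Equiv.Perm ℤ} (hσ : σ ∈ Bgroup n) {j : ℤ} (hj : (n : ℤ) < |j|) :
    σ.symm j = j :=
  (Subgroup.inv_mem _ hσ).2 j hj

lemma zOf_isWord {l m : ℕ} {σ : Equiv.Perm ℤ} (hσ : σ ∈ Bgroup n) {u v : ℤ → ℤ}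
    (hu : IsWord n m u) (hv : IsWord n l v) :
    IsWord n ((2 * l + 1) * m + l) (zOf l σ u v) := by
  refine ⟨?_, ?_, ?_⟩
  · intro j
    rw [zOf, zOf, B_inv_odd n hσ, hu.1, hv.1]
    ring
  · intro j
    rw [zOf]
    have h1 := abs_le.1 (hu.2.1 (σ.symm j))
    have h2 := abs_le.1 (hv.2.1 j)
    have h5 := mul_le_mul_of_nonneg_left h1.2 (show (0:ℤ) ≤ 2*l+1 by omega)
    have h6 := mul_le_mul_of_nonneg_left h1.1 (show (0:ℤ) ≤ 2*l+1 by omega)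
    have h7 : (2*(l:ℤ)+1) * (-(m:ℤ)) = -((2*(l:ℤ)+1) * (m:ℤ)) := by ring
    rw [abs_le]
    push_cast
    omega
  · intro j hj
    rw [zOf, B_inv_fix n hσ hj, hu.2.2 j hj, hv.2.2 j hj]
    ring

lemma zOf_compat {l m : ℕ} {σ π : Equiv.Perm ℤ} (hσ : σ ∈ Bgroup n) (hπ : π ∈ Bgroup n)
    {u v : ℤ → ℤ} (hu : IsWord n m u) (hv : IsWord n l v)
    (hcu : Compat n u (σ⁻¹ * π)) (hcv : Compat n v σ) :
    Compat n (zOf l σ u v) π := by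
  have hτ : (σ⁻¹ * π : Equiv.Perm ℤ) ∈ Bgroup n :=
    Subgroup.mul_mem _ (Subgroup.inv_mem _ hσ) hπ
  intro k hk k' hk' hlt
  have hπk : |π k| ≤ (n : ℤ) := B_abs_le n hπ ((mem_II n).1 hk)
  have hπk' : |π k'| ≤ (n : ℤ) := B_abs_le n hπ ((mem_II n).1 hk')
  have hτk : |(σ⁻¹ * π : Equiv.Perm ℤ) k| ≤ (n : ℤ) := B_abs_le n hτ ((mem_II n).1 hk)
  have hτk' : |(σ⁻¹ * π : Equiv.Perm ℤ) k'| ≤ (n : ℤ) := B_abs_le n hτ ((mem_II n).1 hk')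
  have hval : ∀ x, zOf l σ u v (π x) = (2*(l:ℤ)+1) * u ((σ⁻¹ * π : Equiv.Perm ℤ) x) + v (π x) := by
    intro x
    rfl
  have hstep := hcu k hk k' hk' hlt
  rw [key_lt_iff n hτk hτk'] at hstep
  rw [key_lt_iff n hπk hπk']
  rcases hstep with h1 | ⟨h1, h2⟩
  · left
    rw [hval k, hval k']
    have h5 : (2*(l:ℤ)+1) * (u ((σ⁻¹ * π : Equiv.Perm ℤ) k) + 1) ≤
        (2*(l:ℤ)+1) * u ((σ⁻¹ * π : Equiv.Perm ℤ) k') :=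
      mul_le_mul_of_nonneg_left (by omega) (by omega)
    have h6 : (2*(l:ℤ)+1) * (u ((σ⁻¹ * π : Equiv.Perm ℤ) k) + 1) =
        (2*(l:ℤ)+1) * u ((σ⁻¹ * π : Equiv.Perm ℤ) k) + (2*l+1) := by ring
    have hb1 := abs_le.1 (hv.2.1 (π k))
    have hb2 := abs_le.1 (hv.2.1 (π k'))
    omega
  · have hm1 : (σ⁻¹ * π : Equiv.Perm ℤ) k ∈ II n := (mem_II n).2 hτk
    have hm2 : (σ⁻¹ * π : Equiv.Perm ℤ) k' ∈ II n := (mem_II n).2 hτk'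
    have hvstep := hcv _ hm1 _ hm2 h2
    have hs : ∀ x, σ ((σ⁻¹ * π : Equiv.Perm ℤ) x) = π x := by
      intro x
      simp [Equiv.Perm.mul_apply]
    rw [hs, hs] at hvstep
    rw [key_lt_iff n hπk hπk'] at hvstep
    rw [hval k, hval k', h1]
    rcases hvstep with h3 | ⟨h3, h4⟩
    · left
      omega
    · right
      exact ⟨by rw [h3], h4⟩

lemma zOf_bq {l m : ℕ} (σ : Equiv.Perm ℤ) {u v : ℤ → ℤ}
    (hu : IsWord n m u) (hv : IsWord n l v) : bq l (zOf l σ u v) = v := by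
  funext x
  have h2 := abs_le.1 (hv.2.1 x)
  have hrw : zOf l σ u v x + l = (v x + l) + (2 * l + 1) * u (σ.symm x) := by
    rw [zOf]; ring
  rw [bq, hrw, Int.add_mul_emod_self_left, Int.emod_eq_of_lt (by omega) (by omega)]
  ring

lemma zOf_aq {l m : ℕ} (σ : Equiv.Perm ℤ) {u v : ℤ → ℤ}
    (hu : IsWord n m u) (hv : IsWord n l v) (x : ℤ) :
    aq l (zOf l σ u v) x = u (σ.symm x) := by
  have h2 := abs_le.1 (hv.2.1 x)
  have hrw : zOf l σ u v x + l = (v x + l) + (2 * l + 1) * u (σ.symm x) := by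
    rw [zOf]; ring
  rw [aq, hrw, Int.add_mul_ediv_left _ _ (by omega : (2*(l:ℤ)+1) ≠ 0),
    Int.ediv_eq_zero_of_lt (by omega) (by omega)]
  ring

/-- The key bijection behind the convolution identity. -/
def prodFibEquiv (m l : ℕ) (π : ↥(Bgroup n)) :
    (Σ σ : ↥(Bgroup n), Fib n l σ.1 × Fib n m ((σ⁻¹ * π : ↥(Bgroup n)) : Equiv.Perm ℤ)) ≃
      Fib n ((2 * l + 1) * m + l) (π : Equiv.Perm ℤ) := by
  apply Equiv.ofBijective
    (fun t => (⟨zOf l t.1.1 t.2.2.1 t.2.1.1,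
       zOf_isWord n t.1.2 t.2.2.2.1 t.2.1.2.1,
       zOf_compat n t.1.2 π.2 t.2.2.2.1 t.2.1.2.1 t.2.2.2.2 t.2.1.2.2⟩ :
         Fib n ((2 * l + 1) * m + l) (π : Equiv.Perm ℤ)))
  constructor
  · -- injective
    rintro ⟨σ, v, u⟩ ⟨σ', v', u'⟩ h
    have hz : zOf l σ.1 u.1 v.1 = zOf l σ'.1 u'.1 v'.1 := congrArg Subtype.val h
    have hv : v.1 = v'.1 := by
      rw [← zOf_bq n σ.1 u.2.1 v.2.1, hz, zOf_bq n σ'.1 u'.2.1 v'.2.1]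
    have hσ : σ = σ' := by
      apply Subtype.ext
      rw [compat_sortPerm_unique n v.2.1 σ.2 v.2.2,
        compat_sortPerm_unique n v'.2.1 σ'.2 v'.2.2, hv]
    subst hσ
    have hu : u.1 = u'.1 := by
      funext x
      have e1 := zOf_aq n σ.1 u.2.1 v.2.1 (σ.1 x)
      have e2 := zOf_aq n σ.1 u'.2.1 v'.2.1 (σ.1 x)
      rw [hz] at e1
      rw [Equiv.symm_apply_apply] at e1 e2
      rw [← e1, ← e2]
    exact congrArg (Sigma.mk σ) (Prod.ext (Subtype.ext hv) (Subtype.ext hu))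
  · -- surjective
    rintro ⟨z, hzW, hzC⟩
    have hvW : IsWord n l (bq l z) := bq_isWord n hzW
    set sp := sortPerm n (bq l z) with hsp
    have hspm : sp ∈ Bgroup n := sortPerm_mem n hvW
    have hspc : Compat n (bq l z) sp := compat_sortPerm n hvW
    set u : ℤ → ℤ := fun x => aq l z (sp x) with hudef
    have huW : IsWord n m u := by
      refine ⟨?_, ?_, ?_⟩
      · intro j
        rw [hudef]
        dsimp only
        rw [hspm.1, aq_neg l hzW.1]
      · intro j
        exact aq_bound hzW.2.1 (sp j)
      · intro j hj
        rw [hudef]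
        dsimp only
        rw [hspm.2 j hj]
        exact aq_support l (hzW.2.2 j hj)
    have hcu : Compat n u (sp⁻¹ * π.1) := by
      have hτ : (sp⁻¹ * π.1 : Equiv.Perm ℤ) ∈ Bgroup n :=
        Subgroup.mul_mem _ (Subgroup.inv_mem _ hspm) π.2
      intro k hk k' hk' hlt
      have hτk : |(sp⁻¹ * π.1 : Equiv.Perm ℤ) k| ≤ (n : ℤ) := B_abs_le n hτ ((mem_II n).1 hk)
      have hτk' : |(sp⁻¹ * π.1 : Equiv.Perm ℤ) k'| ≤ (n : ℤ) := B_abs_le n hτ ((mem_II n).1 hk')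
      have hπk : |π.1 k| ≤ (n : ℤ) := B_abs_le n π.2 ((mem_II n).1 hk)
      have hπk' : |π.1 k'| ≤ (n : ℤ) := B_abs_le n π.2 ((mem_II n).1 hk')
      have huval : ∀ x, u ((sp⁻¹ * π.1 : Equiv.Perm ℤ) x) = aq l z (π.1 x) := by
        intro x
        rw [hudef]
        dsimp only
        congr 1
        simp [Equiv.Perm.mul_apply]
      have hzstep := hzC k hk k' hk' hlt
      rw [key_lt_iff n hπk hπk'] at hzstep
      rw [key_lt_iff n hτk hτk', huval, huval]
      have hreflect : key n (bq l z) (π.1 k) < key n (bq l z) (π.1 k') →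
          (sp⁻¹ * π.1 : Equiv.Perm ℤ) k < (sp⁻¹ * π.1 : Equiv.Perm ℤ) k' := by
        intro hkey
        exact compat_reflect n hspm hspc ((mem_II n).2 hπk) ((mem_II n).2 hπk') hkey
      rcases hzstep with h1 | ⟨h1, h2⟩
      · rcases eq_or_lt_of_le (aq_mono h1) with h3 | h3
        · right
          refine ⟨h3, ?_⟩
          apply hreflect
          rw [key_lt_iff n hπk hπk']
          left
          have d1 := bq_decomp l z (π.1 k)
          have d2 := bq_decomp l z (π.1 k')
          rw [← h3] at d2
          omega
        · left
          exact h3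
      · right
        have h3 := aq_eq_of_eq (l := l) h1
        refine ⟨h3.1, ?_⟩
        apply hreflect
        rw [key_lt_iff n hπk hπk']
        right
        exact ⟨h3.2, h2⟩
    refine ⟨⟨⟨sp, hspm⟩, ⟨⟨bq l z, hvW, hspc⟩, ⟨u, huW, hcu⟩⟩⟩, ?_⟩
    apply Subtype.ext
    funext x
    show zOf l sp u (bq l z) x = z x
    rw [zOf, hudef]
    dsimp only
    rw [Equiv.apply_symm_apply]
    exact (bq_decomp l z x).symm

/-! ### Counting fibers -/

instance FibFinite (m : ℕ) (ρ : Equiv.Perm ℤ) : Finite (Fib n m ρ) := by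
  have hF : Function.Injective (fun (w : Fib n m ρ) =>
      (fun k : {x // x ∈ II n} => (⟨w.1 k.1, by
        rw [Finset.mem_Icc]
        have h := abs_le.1 (w.2.1.2.1 k.1)
        exact ⟨h.1, h.2⟩⟩ :
        {x // x ∈ Finset.Icc (-(m:ℤ)) (m:ℤ)}))) := by
    intro w w' h
    apply Subtype.ext
    funext j
    by_cases hj : |j| ≤ (n:ℤ)
    · have := congrFun h ⟨j, (mem_II n).2 hj⟩
      exact congrArg Subtype.val this
    · rw [w.2.1.2.2 j (by omega), w'.2.1.2.2 j (by omega)]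
  exact Finite.of_injective _ hF

noncomputable instance (m : ℕ) (ρ : Equiv.Perm ℤ) : Fintype (Fib n m ρ) := Fintype.ofFinite _

def NN (m : ℕ) (π : ↥(Bgroup n)) : ℕ := Nat.card (Fib n m (π : Equiv.Perm ℤ))

def cval (m k : ℕ) : ℕ := if k ≤ m then Nat.card (Yfree n (m - k)) else 0

lemma NN_eq (m : ℕ) (π : ↥(Bgroup n)) : NN n m π = cval n m (desB n (π : Equiv.Perm ℤ)) := by
  by_cases h : desB n (π : Equiv.Perm ℤ) ≤ m
  · rw [NN, Nat.card_congr (fibEquiv n π.2 h), cval, if_pos h]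
  · rw [NN, cval, if_neg h]
    haveI := fib_isEmpty n (m := m) (π := (π : Equiv.Perm ℤ)) π.2 (by omega)
    exact Nat.card_of_isEmpty

lemma cval_diag (m : ℕ) : cval n m m = 1 := by
  rw [cval, if_pos (le_refl m), Nat.sub_self, Yfree_zero_card]

lemma cval_zero {m k : ℕ} (h : m < k) : cval n m k = 0 := by
  rw [cval, if_neg (by omega)]

lemma NN_conv (l m : ℕ) (π : ↥(Bgroup n)) :
    ∑ σ : ↥(Bgroup n), NN n l σ * NN n m (σ⁻¹ * π) = NN n ((2 * l + 1) * m + l) π := by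
  rw [NN, ← Nat.card_congr (prodFibEquiv n m l π)]
  rw [Nat.card_eq_fintype_card, Fintype.card_sigma]
  apply Finset.sum_congr rfl
  intro σ _
  rw [Fintype.card_prod, NN, NN, Nat.card_eq_fintype_card, Nat.card_eq_fintype_card]

/-! ### The algebra elements -/

def AA (m : ℕ) : MonoidAlgebra ℚ ↥(Bgroup n) :=
  ∑ π : ↥(Bgroup n), (NN n m π : ℚ) • MonoidAlgebra.of ℚ ↥(Bgroup n) π

def myE (k : ℕ) : MonoidAlgebra ℚ ↥(Bgroup n) :=
  ∑ π : ↥(Bgroup n),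
    if desB n (π : Equiv.Perm ℤ) = k then MonoidAlgebra.of ℚ ↥(Bgroup n) π else 0

lemma AA_mul (l m : ℕ) : AA n l * AA n m = AA n ((2 * l + 1) * m + l) := by
  have step1 : AA n l * AA n m = ∑ σ : ↥(Bgroup n), ∑ π : ↥(Bgroup n),
      (((NN n l σ * NN n m (σ⁻¹ * π) : ℕ)) : ℚ) • MonoidAlgebra.of ℚ ↥(Bgroup n) π := by
    rw [AA, AA, Finset.sum_mul_sum]
    apply Finset.sum_congr rfl
    intro σ _
    apply Fintype.sum_equiv (Equiv.mulLeft σ)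
    intro τ
    have h1 : (Equiv.mulLeft σ) τ = σ * τ := rfl
    rw [h1, smul_mul_smul_comm, ← map_mul, inv_mul_cancel_left]
    norm_cast
  rw [step1, Finset.sum_comm, AA]
  apply Finset.sum_congr rfl
  intro π _
  rw [← NN_conv n l m π, Nat.cast_sum, Finset.sum_smul]

lemma AA_mul_comm (l m : ℕ) : AA n l * AA n m = AA n m * AA n l := by
  rw [AA_mul, AA_mul]
  congr 1
  ring

lemma AA_eq (m : ℕ) :
    AA n m = ∑ k ∈ Finset.range (n + 1), (cval n m k : ℚ) • myE n k := by
  have step1 : ∀ k, (cval n m k : ℚ) • myE n k = ∑ π : ↥(Bgroup n),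
      (if desB n (π : Equiv.Perm ℤ) = k then (cval n m k : ℚ) • MonoidAlgebra.of ℚ ↥(Bgroup n) π
        else 0) := by
    intro k
    rw [myE, Finset.smul_sum]
    apply Finset.sum_congr rfl
    intro π _
    rw [smul_ite, smul_zero]
  simp only [step1]
  rw [Finset.sum_comm, AA]
  apply Finset.sum_congr rfl
  intro π _
  have hmem : desB n (π : Equiv.Perm ℤ) ∈ Finset.range (n + 1) :=
    Finset.mem_range.2 (by have := desB_le n (π : Equiv.Perm ℤ); omega)
  rw [Finset.sum_ite_eq, if_pos hmem, NN_eq]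

lemma myE_repr (k : ℕ) (hk : k ≤ n) :
    myE n k = AA n k - ∑ j ∈ Finset.range k, (cval n k j : ℚ) • myE n j := by
  rw [AA_eq]
  have hsub : Finset.range (k + 1) ⊆ Finset.range (n + 1) := by
    intro x hx
    simp only [Finset.mem_range] at hx ⊢
    omega
  rw [← Finset.sum_subset hsub (by
    intro j hj1 hj2
    simp only [Finset.mem_range] at hj1 hj2
    have hlt : k < j := by omega
    rw [cval_zero n hlt]
    simp)]
  rw [Finset.sum_range_succ, cval_diag, Nat.cast_one, one_smul]
  abel

def TT : Submodule ℚ (MonoidAlgebra ℚ ↥(Bgroup n)) := Submodule.span ℚ (Set.range (AA n))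

lemma AA_mem_TT (m : ℕ) : AA n m ∈ TT n := Submodule.subset_span ⟨m, rfl⟩

lemma myE_mem_TT : ∀ k, k ≤ n → myE n k ∈ TT n := by
  intro k
  induction k using Nat.strong_induction_on with
  | _ k ih =>
    intro hk
    rw [myE_repr n k hk]
    apply Submodule.sub_mem _ (AA_mem_TT n k)
    apply Submodule.sum_mem
    intro j hj
    have hjk : j < k := Finset.mem_range.1 hj
    exact Submodule.smul_mem _ _ (ih j hjk (by omega))

lemma TT_mul_mem {a b : MonoidAlgebra ℚ ↥(Bgroup n)} (ha : a ∈ TT n) (hb : b ∈ TT n) :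
    a * b ∈ TT n := by
  have H : ∀ x ∈ Set.range (AA n), ∀ y ∈ TT n, x * y ∈ TT n := by
    rintro x ⟨l, rfl⟩ y hy
    refine Submodule.span_induction ?_ ?_ ?_ ?_ hy
    · rintro z ⟨m, rfl⟩
      rw [AA_mul]
      exact AA_mem_TT n _
    · rw [mul_zero]
      exact Submodule.zero_mem _
    · intro u v hu hv pu pv
      rw [mul_add]
      exact Submodule.add_mem _ pu pv
    · intro c u hu pu
      rw [mul_smul_comm]
      exact Submodule.smul_mem _ _ pu
  refine Submodule.span_induction (fun x hx => H x hx b hb) ?_ ?_ ?_ ha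
  · rw [zero_mul]
    exact Submodule.zero_mem _
  · intro u v hu hv pu pv
    rw [add_mul]
    exact Submodule.add_mem _ pu pv
  · intro c u hu pu
    rw [smul_mul_assoc]
    exact Submodule.smul_mem _ _ pu

lemma TT_comm {a b : MonoidAlgebra ℚ ↥(Bgroup n)} (ha : a ∈ TT n) (hb : b ∈ TT n) :
    a * b = b * a := by
  have H : ∀ x ∈ Set.range (AA n), ∀ y ∈ TT n, Commute x y := by
    rintro x ⟨l, rfl⟩ y hy
    refine Submodule.span_induction ?_ ?_ ?_ ?_ hy
    · rintro z ⟨m, rfl⟩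
      exact AA_mul_comm n l m
    · exact Commute.zero_right _
    · intro u v hu hv pu pv
      exact Commute.add_right pu pv
    · intro c u hu pu
      exact Commute.smul_right pu c
  have H2 : Commute a b := by
    refine Submodule.span_induction (fun x hx => H x hx b hb) ?_ ?_ ?_ ha
    · exact Commute.zero_left _
    · intro u v hu hv pu pv
      exact Commute.add_left pu pv
    · intro c u hu pu
      exact Commute.smul_left pu c
  exact H2

/-! ### Representatives with prescribed descent number -/

def negLow (k : ℕ) : Equiv.Perm ℤ where
  toFun x := if |x| ≤ (k : ℤ) then -x else x
  invFun x := if |x| ≤ (k : ℤ) then -x else x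
  left_inv x := by
    dsimp only
    by_cases h : |x| ≤ (k : ℤ)
    · rw [if_pos h, if_pos (by rwa [abs_neg]), neg_neg]
    · rw [if_neg h, if_neg h]
  right_inv x := by
    dsimp only
    by_cases h : |x| ≤ (k : ℤ)
    · rw [if_pos h, if_pos (by rwa [abs_neg]), neg_neg]
    · rw [if_neg h, if_neg h]

lemma negLow_apply (k : ℕ) (x : ℤ) : negLow k x = if |x| ≤ (k : ℤ) then -x else x := rfl

lemma negLow_mem {k : ℕ} (hk : k ≤ n) : negLow k ∈ Bgroup n := by
  constructor
  · intro i
    rw [negLow_apply, negLow_apply]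
    by_cases h : |i| ≤ (k : ℤ)
    · rw [if_pos (by rwa [abs_neg]), if_pos h]
    · rw [if_neg (by rwa [abs_neg]), if_neg h]
  · intro i hi
    rw [negLow_apply, if_neg (by omega)]

lemma desSetB_negLow {k : ℕ} (hk : k ≤ n) : desSetB n (negLow k) = Finset.range k := by
  ext s
  rw [mem_desSetB n, Finset.mem_range]
  constructor
  · rintro ⟨hs, hlt⟩
    by_contra hcon
    push_neg at hcon
    have v1 : negLow k ((s : ℤ) + 1) = (s : ℤ) + 1 := by
      rw [negLow_apply, if_neg (by rw [abs_le]; push_cast; omega)]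
    rcases eq_or_lt_of_le hcon with h1 | h1
    · have v2 : negLow k (s : ℤ) = -(s : ℤ) := by
        rw [negLow_apply, if_pos (by rw [abs_le]; push_cast; omega)]
      rw [v1, v2] at hlt
      omega
    · have v2 : negLow k (s : ℤ) = (s : ℤ) := by
        rw [negLow_apply, if_neg (by rw [abs_le]; push_cast; omega)]
      rw [v1, v2] at hlt
      omega
  · intro hsk
    refine ⟨by omega, ?_⟩
    rw [negLow_apply, negLow_apply, if_pos (by rw [abs_le]; push_cast; omega),
      if_pos (by rw [abs_le]; push_cast; omega)]
    omega

lemma desB_negLow {k : ℕ} (hk : k ≤ n) : desB n (negLow k) = k := by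
  rw [desB, desSetB_negLow n hk, Finset.card_range]

/-! ### Linear independence -/

lemma myE_apply (k : ℕ) (π0 : ↥(Bgroup n)) :
    (myE n k).coeff π0 = if desB n (π0 : Equiv.Perm ℤ) = k then 1 else 0 := by
  rw [myE, MonoidAlgebra.coeff_sum, Finset.sum_apply']
  rw [Finset.sum_eq_single π0]
  · rw [apply_ite (fun f : MonoidAlgebra ℚ ↥(Bgroup n) => f.coeff π0)]
    by_cases h : desB n (π0 : Equiv.Perm ℤ) = k
    · rw [if_pos h, if_pos h, MonoidAlgebra.of_apply, MonoidAlgebra.coeff_single, Finsupp.single_eq_same]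
    · rw [if_neg h, if_neg h]
      rfl
  · intro π _ hne
    by_cases h : desB n (π : Equiv.Perm ℤ) = k
    · rw [if_pos h, MonoidAlgebra.of_apply, MonoidAlgebra.coeff_single, Finsupp.single_eq_of_ne' hne]
    · rw [if_neg h]
      rfl
  · intro h
    exact absurd (Finset.mem_univ π0) h

lemma myE_linearIndependent :
    LinearIndependent ℚ (fun k : Fin (n + 1) => myE n k.1) := by
  rw [Fintype.linearIndependent_iff]
  intro g hg j
  have hjn : j.1 ≤ n := by omega
  set η : ↥(Bgroup n) := ⟨negLow j.1, negLow_mem n hjn⟩ with hη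
  have h2 : (∑ k : Fin (n + 1), g k • myE n k.1).coeff η = (0 : MonoidAlgebra ℚ ↥(Bgroup n)).coeff η := by
    rw [hg]
  rw [MonoidAlgebra.coeff_sum, Finset.sum_apply'] at h2
  have hdes : desB n (η : Equiv.Perm ℤ) = j.1 := desB_negLow n hjn
  have hsm : ∀ (k : Fin (n + 1)), (g k • myE n k.1).coeff η = g k * (myE n k.1).coeff η := fun k => rfl
  simp only [hsm, myE_apply, hdes, MonoidAlgebra.coeff_zero, Finsupp.coe_zero,
    Pi.zero_apply, Fin.val_inj, mul_ite, mul_one, mul_zero] at h2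
  rwa [Finset.sum_ite_eq, if_pos (Finset.mem_univ j)] at h2

end Stmt4

open Stmt4 in
theorem stmt4 (n : ℕ) :
    let E : ℕ → MonoidAlgebra ℚ ↥(Bgroup n) := fun i =>
      ∑ᶠ π : ↥(Bgroup n),
        if desB n (π : Equiv.Perm ℤ) = i - 1
          then MonoidAlgebra.of ℚ ↥(Bgroup n) π else 0
    let S : Submodule ℚ (MonoidAlgebra ℚ ↥(Bgroup n)) :=
      Submodule.span ℚ (E '' Set.Icc 1 (n + 1))
    (∀ a ∈ S, ∀ b ∈ S, a * b ∈ S ∧ a * b = b * a) ∧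
      Module.finrank ℚ ↥S = n + 1 := by
  intro E S
  have hE : ∀ i : ℕ, E i = myE n (i - 1) := by
    intro i
    show (∑ᶠ π : ↥(Bgroup n), _) = _
    rw [finsum_eq_sum_of_fintype]
    rfl
  have hsub1 : S ≤ TT n := by
    apply Submodule.span_le.2
    rintro x ⟨i, hi, rfl⟩
    rw [SetLike.mem_coe, hE i]
    rcases Set.mem_Icc.1 hi with ⟨h1, h2⟩
    exact myE_mem_TT n (i - 1) (by omega)
  have hsub2 : TT n ≤ S := by
    apply Submodule.span_le.2
    rintro x ⟨m, rfl⟩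
    rw [SetLike.mem_coe, AA_eq]
    apply Submodule.sum_mem
    intro k hk
    apply Submodule.smul_mem
    have hkn : k ≤ n := by
      have := Finset.mem_range.1 hk
      omega
    have : myE n k = E (k + 1) := by
      rw [hE (k + 1)]
      simp
    rw [this]
    exact Submodule.subset_span ⟨k + 1, Set.mem_Icc.2 ⟨by omega, by omega⟩, rfl⟩
  have hST : S = TT n := le_antisymm hsub1 hsub2
  constructor
  · intro a ha b hb
    rw [hST] at ha hb
    constructor
    · rw [hST]
      exact TT_mul_mem n ha hb
    · exact TT_comm n ha hb
  · have hrange : E '' Set.Icc 1 (n + 1) = Set.range (fun k : Fin (n + 1) => myE n k.1) := by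
      ext x
      simp only [Set.mem_image, Set.mem_range, Set.mem_Icc]
      constructor
      · rintro ⟨i, ⟨h1, h2⟩, rfl⟩
        exact ⟨⟨i - 1, by omega⟩, (hE i).symm⟩
      · rintro ⟨k, rfl⟩
        refine ⟨k.1 + 1, ⟨by omega, by have := k.2; omega⟩, ?_⟩
        rw [hE (k.1 + 1)]
        simp
    show Module.finrank ℚ ↥(Submodule.span ℚ (E '' Set.Icc 1 (n + 1))) = n + 1
    rw [hrange, finrank_span_eq_card (myE_linearIndependent n)]
    simp
end
end

section
/- The generating function Σ_{k ≥ 0} Ω'(π; k) t^k for the enriched order polynomial of a permutation π of [n] equals (1/2)·((1+t)^{n+1}/(1-t)^{n+1})·(4t/(1+t)^2)^{pe(π)+1}. In particular, Ω'(π; k) depends only on the number of interior peaks of π. -/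
open scoped Classical

noncomputable section

/-- `i` is a peak of `π` (with the convention `π(0) = π(n+1) = 0`). -/
def isPk {n : ℕ} (π : Equiv.Perm (Fin n)) (i : ℕ) : Prop :=
  pval π (i - 1) < pval π i ∧ pval π (i + 1) < pval π i

/-- Interior peak set: peaks `i` with `1 < i < n`. -/
def intPk {n : ℕ} (π : Equiv.Perm (Fin n)) : Finset ℕ :=
  (Finset.Ioo 1 n).filter (isPk π)

/-- Left peak set: peaks `i` with `1 ≤ i < n`. -/
def leftPk {n : ℕ} (π : Equiv.Perm (Fin n)) : Finset ℕ :=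
  (Finset.Ico 1 n).filter (isPk π)

/-- Right peak set: peaks `i` with `1 < i ≤ n`. -/
def rightPk {n : ℕ} (π : Equiv.Perm (Fin n)) : Finset ℕ :=
  (Finset.Ioc 1 n).filter (isPk π)

/-- Exterior peak set: peaks `i` with `1 ≤ i ≤ n`. -/
def extPk {n : ℕ} (π : Equiv.Perm (Fin n)) : Finset ℕ :=
  (Finset.Icc 1 n).filter (isPk π)

/-- Position of a nonzero integer `a` in the total order `-1 < 1 < -2 < 2 < ⋯`. -/
def ek (a : ℤ) : ℤ := if 0 < a then 2 * a - 1 else -2 * a - 2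

/-- `Ω'(π; k)`: the number of enriched `π`-partitions with parts in
`[k]' = {-1 < 1 < -2 < 2 < ⋯ < -k < k}`. -/
def enrichedCount {n : ℕ} (π : Equiv.Perm (Fin n)) (k : ℕ) : ℕ :=
  Nat.card {a : Fin n → ℤ //
    (∀ s, a s ≠ 0 ∧ |a s| ≤ (k : ℤ)) ∧
    ∀ (s : ℕ) (hs : s + 1 < n),
      if π ⟨s + 1, hs⟩ < π ⟨s, Nat.lt_of_succ_lt hs⟩ then
        ek (a ⟨s, Nat.lt_of_succ_lt hs⟩) < ek (a ⟨s + 1, hs⟩) ∨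
          (a ⟨s, Nat.lt_of_succ_lt hs⟩ = a ⟨s + 1, hs⟩ ∧ a ⟨s + 1, hs⟩ < 0)
      else
        ek (a ⟨s, Nat.lt_of_succ_lt hs⟩) < ek (a ⟨s + 1, hs⟩) ∨
          (a ⟨s, Nat.lt_of_succ_lt hs⟩ = a ⟨s + 1, hs⟩ ∧ 0 < a ⟨s + 1, hs⟩)}

/-- Position of an integer `a` in the total order `0 < -1 < 1 < -2 < 2 < ⋯`. -/
def el (a : ℤ) : ℤ := if 0 < a then 2 * a else if a = 0 then 0 else -2 * a - 1

/-- `Ω^{(ℓ)}(π; k)`: the number of left enriched `π`-partitions with parts in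
`[k]^{(ℓ)} = {0 < -1 < 1 < ⋯ < -k < k}`. -/
def leftEnrichedCount {n : ℕ} (π : Equiv.Perm (Fin n)) (k : ℕ) : ℕ :=
  Nat.card {a : Fin n → ℤ //
    (∀ s, |a s| ≤ (k : ℤ)) ∧
    ∀ (s : ℕ) (hs : s + 1 < n),
      if π ⟨s + 1, hs⟩ < π ⟨s, Nat.lt_of_succ_lt hs⟩ then
        el (a ⟨s, Nat.lt_of_succ_lt hs⟩) < el (a ⟨s + 1, hs⟩) ∨
          (a ⟨s, Nat.lt_of_succ_lt hs⟩ = a ⟨s + 1, hs⟩ ∧ a ⟨s + 1, hs⟩ < 0)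
      else
        el (a ⟨s, Nat.lt_of_succ_lt hs⟩) < el (a ⟨s + 1, hs⟩) ∨
          (a ⟨s, Nat.lt_of_succ_lt hs⟩ = a ⟨s + 1, hs⟩ ∧ 0 ≤ a ⟨s + 1, hs⟩)}

namespace Stmt9Aux
open Finset

/-- allowed pair of e-values at slot `s` -/
def okP (d : ℕ → Bool) (s x y : ℕ) : Prop :=
  x < y ∨ (x = y ∧ x % 2 = (if d s then 0 else 1))

variable {n k : ℕ}

def eN (e : Fin n → Fin (2*k)) (i : ℕ) : ℕ := if h : i < n then (e ⟨i,h⟩ : ℕ) else 0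

def validE (d : ℕ → Bool) (e : Fin n → Fin (2*k)) : Prop :=
  ∀ s, s + 1 < n → okP d s (eN e s) (eN e (s+1))

/-- positions of "AD" patterns (interior peaks), 0-indexed slots -/
def peaksD (n : ℕ) (d : ℕ → Bool) : Finset ℕ :=
  (range (n-2)).filter (fun s => d s = false ∧ d (s+1) = true)

/-- admissible break sets -/
def goodS (n : ℕ) (d : ℕ → Bool) : Finset (Finset ℕ) :=
  (range (n-1)).powerset.filter (fun S => ∀ s ∈ peaksD n d, s ∈ S ∨ s+1 ∈ S)

/-- block index of position `i` w.r.t. break set `S` -/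
def bi (S : Finset ℕ) (i : ℕ) : ℕ := (S.filter (· < i)).card

lemma bi_mono (S : Finset ℕ) {i j : ℕ} (h : i ≤ j) : bi S i ≤ bi S j :=
  card_le_card (monotone_filter_right S (fun x hx => by omega) : _)

lemma bi_zero (S : Finset ℕ) : bi S 0 = 0 := by
  simp [bi, filter_eq_empty_iff]

lemma bi_succ (S : Finset ℕ) (s : ℕ) :
    bi S (s+1) = bi S s + (if s ∈ S then 1 else 0) := by
  unfold bi
  have : S.filter (· < s + 1) = (S.filter (· < s)) ∪ (S.filter (· = s)) := by
    ext x; simp; constructor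
    · rintro ⟨hx, h⟩; rcases Nat.lt_or_ge x s with h'|h'
      · exact Or.inl ⟨hx, h'⟩
      · exact Or.inr ⟨hx, by omega⟩
    · rintro (⟨hx,h⟩|⟨hx,h⟩) <;> exact ⟨hx, by omega⟩
  rw [this, card_union_of_disjoint]
  · congr 1
    by_cases hs : s ∈ S
    · simp [hs, filter_eq']
    · simp [hs, filter_eq']
  · rw [disjoint_left]; intro x hx hx'; simp at hx hx'; omega

lemma bi_succ_of_mem {S : Finset ℕ} {s : ℕ} (h : s ∈ S) : bi S (s+1) = bi S s + 1 := by
  simp [bi_succ, h]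

lemma bi_succ_of_not_mem {S : Finset ℕ} {s : ℕ} (h : s ∉ S) : bi S (s+1) = bi S s := by
  simp [bi_succ, h]

lemma bi_le_card (S : Finset ℕ) (i : ℕ) : bi S i ≤ S.card :=
  card_le_card (filter_subset _ _)

lemma bi_last {S : Finset ℕ} (hS : S ⊆ range (n-1)) : bi S (n-1) = S.card := by
  unfold bi; congr 1
  apply filter_true_of_mem
  intro x hx; have := hS hx; simp at this; omega

/-- intermediate value for bi -/
lemma bi_reach {S : Finset ℕ} (hS : S ⊆ range (n-1)) (hn : 1 ≤ n) {j : ℕ}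
    (hj : j ≤ S.card) : ∃ i, i < n ∧ bi S i = j := by
  have key : ∀ N, ∀ j ≤ bi S N, ∃ i ≤ N, bi S i = j := by
    intro N
    induction N with
    | zero => intro j hj; rw [bi_zero] at hj; interval_cases j; exact ⟨0, le_refl _, bi_zero S⟩
    | succ N ih =>
      intro j hj
      rcases Nat.lt_or_ge j (bi S (N+1)) with h|h
      · have : j ≤ bi S N := by
          have := bi_succ S N; split_ifs at this <;> omega
        obtain ⟨i, hi, hbi⟩ := ih j this
        exact ⟨i, by omega, hbi⟩
      · exact ⟨N+1, le_refl _, by omega⟩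
  obtain ⟨i, hi, hbi⟩ := key (n-1) j (by rw [bi_last hS]; exact hj)
  exact ⟨i, by omega, hbi⟩

lemma bi_sandwich (S : Finset ℕ) {i t j : ℕ} (h1 : i ≤ t) (h2 : t ≤ j)
    (h : bi S i = bi S j) : bi S t = bi S i := by
  have := bi_mono S h1; have := bi_mono S h2; omega


section Valley

variable (n : ℕ) (d : ℕ → Bool) (S : Finset ℕ)

/-- there is an ascent-pair strictly before `i` inside `i`'s block -/
def BeforeA (i : ℕ) : Prop := ∃ s, s + 1 ≤ i ∧ bi S s = bi S i ∧ d s = false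

/-- there is a descent-pair at/after `i` inside `i`'s block -/
def AfterD (i : ℕ) : Prop := ∃ s, i ≤ s ∧ s + 1 < n ∧ bi S (s+1) = bi S i ∧ d s = true

/-- predicate for the valley position of block `j` -/
def isVal (j i : ℕ) : Prop :=
  i < n ∧ bi S i = j ∧ ∀ s, i ≤ s → s + 1 < n → bi S (s+1) = j → d s = false

variable {n d S}

lemma no_AD_in_block (hgood : S ∈ goodS n d) :
    ∀ t s, d s = false → s ≤ t → t + 1 < n → bi S s = bi S (t+1) → d t = false := by
  simp only [goodS, mem_filter, mem_powerset] at hgood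
  obtain ⟨hS, hpk⟩ := hgood
  intro t
  induction t with
  | zero => intro s hs h1 _ _; interval_cases s; exact hs
  | succ t ih =>
    intro s hs h1 h2 h3
    rcases Nat.lt_or_ge s (t+1) with h|h
    · -- s ≤ t
      have hst : s ≤ t := by omega
      have hbt : bi S s = bi S (t+1) := by
        have m1 := bi_mono S (show s ≤ t+1 by omega)
        have m2 := bi_mono S (show t+1 ≤ t+1+1 by omega)
        omega
      have hdt : d t = false := ih s hs hst (by omega) hbt
      by_contra hd
      have hd' : d (t+1) = true := by revert hd; cases d (t+1) <;> simp
      have hpeak : t ∈ peaksD n d := by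
        simp [peaksD, mem_filter, mem_range]
        exact ⟨by omega, hdt, hd'⟩
      have hint : t ∉ S ∧ t + 1 ∉ S := by
        constructor
        · intro hmem
          have := bi_succ_of_mem (S := S) hmem
          have m1 := bi_mono S (show s ≤ t by omega)
          have m2 := bi_mono S (show t+1 ≤ t+1+1 by omega)
          omega
        · intro hmem
          have := bi_succ_of_mem (S := S) hmem
          have m1 := bi_mono S (show s ≤ t+1 by omega)
          omega
      rcases hpk t hpeak with h'|h' <;> tauto
    · -- s = t+1
      have : s = t+1 := by omega
      subst this; exact hs

lemma isVal_exists (hS : S ⊆ range (n-1)) (hn : 1 ≤ n) {j : ℕ} (hj : j ≤ S.card) :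
    ∃ i, isVal n d S j i := by
  classical
  obtain ⟨i0, hi0, hbi0⟩ := bi_reach hS hn hj
  -- take the largest position in block j
  set T := (range n).filter (fun i => bi S i = j) with hT
  have hne : T.Nonempty := ⟨i0, by simp [hT, mem_filter, mem_range]; exact ⟨hi0, hbi0⟩⟩
  have hmm := mem_filter.1 (T.max'_mem hne)
  refine ⟨T.max' hne, mem_range.1 hmm.1, hmm.2, ?_⟩
  intro s hs hs1 hbs
  exfalso
  have hmem : s + 1 ∈ T := mem_filter.2 ⟨mem_range.2 hs1, hbs⟩
  have := T.le_max' _ hmem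
  omega

/-- the valley position of block `j` -/
def istar (n : ℕ) (d : ℕ → Bool) (S : Finset ℕ) (j : ℕ) : ℕ :=
  if h : ∃ i, isVal n d S j i then Nat.find h else 0

lemma istar_spec (hS : S ⊆ range (n-1)) (hn : 1 ≤ n) {j : ℕ} (hj : j ≤ S.card) : isVal n d S j (istar n d S j) := by
  have h := isVal_exists (d := d) hS hn hj
  rw [istar, dif_pos h]
  exact Nat.find_spec h

lemma istar_min (hS : S ⊆ range (n-1)) (hn : 1 ≤ n) {j : ℕ} (hj : j ≤ S.card) {i : ℕ} (hi : i < istar n d S j) :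
    ¬ isVal n d S j i := by
  have h := isVal_exists (d := d) hS hn hj
  rw [istar, dif_pos h] at hi
  exact Nat.find_min h hi

/-- L3 : pairs strictly before the valley inside the block are descents -/
lemma before_valley_descent (hS : S ⊆ range (n-1)) (hn : 1 ≤ n) (hgood : S ∈ goodS n d) {j s : ℕ} (hj : j ≤ S.card)
    (h1 : s + 1 ≤ istar n d S j) (h2 : bi S s = j) : d s = true := by
  by_contra hd
  have hd' : d s = false := by revert hd; cases d s <;> simp
  have hspec := istar_spec (d := d) hS hn hj
  apply istar_min hS hn hj (show s < istar n d S j by omega)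
  refine ⟨by have := hspec.1; omega, h2, ?_⟩
  intro t ht ht1 hbt
  exact no_AD_in_block hgood t s hd' ht ht1 (by omega)

/-- L4 : positions before the valley: AfterD and not BeforeA -/
lemma before_valley (hS : S ⊆ range (n-1)) (hn : 1 ≤ n) (hgood : S ∈ goodS n d) {j i : ℕ} (hj : j ≤ S.card)
    (hi : i < n) (hbi : bi S i = j) (hlt : i < istar n d S j) :
    AfterD n d S i ∧ ¬ BeforeA d S i := by
  constructor
  · have := istar_min hS hn hj hlt
    simp only [isVal, not_and, not_forall] at this
    obtain ⟨s, hs, hs1, hbs, hds⟩ := this hi hbi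
    exact ⟨s, hs, hs1, by rw [hbi]; exact hbs, by revert hds; cases d s <;> simp⟩
  · rintro ⟨s, hs, hbs, hds⟩
    have : d s = true :=
      before_valley_descent hS hn hgood hj (by omega) (by omega)
    simp [this] at hds

/-- L5 : positions after the valley are BeforeA -/
lemma after_valley (hS : S ⊆ range (n-1)) (hn : 1 ≤ n) {j i : ℕ} (hj : j ≤ S.card)
    (hi : i < n) (hbi : bi S i = j) (hlt : istar n d S j < i) : BeforeA d S i := by
  have hspec := istar_spec (d := d) hS hn hj
  have hv1 := hspec.1
  have hv2 := hspec.2.1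
  refine ⟨i - 1, by omega, ?_, ?_⟩
  · have m1 := bi_mono S (show istar n d S j ≤ i - 1 by omega)
    have m2 := bi_mono S (show i - 1 ≤ i by omega)
    omega
  · apply hspec.2.2 (i-1) (by omega) (by omega)
    have hi1 : i - 1 + 1 = i := by omega
    rw [hi1, hbi]

/-- L6 : the valley is free -/
lemma valley_free (hS : S ⊆ range (n-1)) (hn : 1 ≤ n) (hgood : S ∈ goodS n d) {j : ℕ} (hj : j ≤ S.card) :
    ¬ BeforeA d S (istar n d S j) ∧ ¬ AfterD n d S (istar n d S j) := by
  have hspec := istar_spec (d := d) hS hn hj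
  have hv1 := hspec.1
  have hv2 := hspec.2.1
  constructor
  · rintro ⟨s, hs, hbs, hds⟩
    have : d s = true :=
      before_valley_descent hS hn hgood hj hs (by omega)
    simp [this] at hds
  · rintro ⟨s, hs, hs1, hbs, hds⟩
    have := hspec.2.2 s hs hs1 (by omega)
    simp [this] at hds

/-- L7 : uniqueness of the free position in a block -/
lemma free_unique (hS : S ⊆ range (n-1)) (hn : 1 ≤ n) (hgood : S ∈ goodS n d) {j i : ℕ} (hj : j ≤ S.card)
    (hi : i < n) (hbi : bi S i = j)
    (hfree : ¬ BeforeA d S i ∧ ¬ AfterD n d S i) : i = istar n d S j := by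
  rcases Nat.lt_trichotomy i (istar n d S j) with h|h|h
  · exact absurd (before_valley hS hn hgood hj hi hbi h).1 hfree.2
  · exact h
  · exact absurd (after_valley hS hn hj hi hbi h) hfree.1

end Valley
section Code

variable {n k : ℕ}

/-- break set of a sequence -/
def breaks (e : Fin n → Fin (2*k)) : Finset ℕ :=
  (range (n-1)).filter (fun s => eN e s / 2 ≠ eN e (s+1) / 2)

lemma breaks_subset (e : Fin n → Fin (2*k)) : breaks e ⊆ range (n-1) :=
  filter_subset _ _

def sigdef (n : ℕ) (d : ℕ → Bool) (S : Finset ℕ) (ε : ℕ → Bool) (i : ℕ) : ℕ :=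
  if BeforeA d S i then 1 else if AfterD n d S i then 0 else (if ε (bi S i) then 1 else 0)

lemma sigdef_le (n : ℕ) (d : ℕ → Bool) (S : Finset ℕ) (ε : ℕ → Bool) (i : ℕ) :
    sigdef n d S ε i ≤ 1 := by
  unfold sigdef; split_ifs <;> omega

def vfun (V : Finset (Fin k)) (m : ℕ) (j : ℕ) : ℕ :=
  if h : V.card = m ∧ j < m then (V.orderEmbOfFin h.1 ⟨j, h.2⟩ : ℕ) else 0

lemma vfun_lt {V : Finset (Fin k)} {m j : ℕ} (hV : V.card = m) (hj : j < m) :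
    vfun V m j < k := by
  rw [vfun, dif_pos ⟨hV, hj⟩]
  exact (V.orderEmbOfFin hV ⟨j, hj⟩).isLt

lemma vfun_strictMono {V : Finset (Fin k)} {m : ℕ} (hV : V.card = m) {i j : ℕ}
    (hij : i < j) (hj : j < m) : vfun V m i < vfun V m j := by
  have hi : i < m := by omega
  rw [vfun, dif_pos ⟨hV, hi⟩, vfun, dif_pos ⟨hV, hj⟩]
  have := (V.orderEmbOfFin hV).strictMono
    (show (⟨i, hi⟩ : Fin m) < (⟨j, hj⟩ : Fin m) from Fin.mk_lt_mk.2 hij)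
  exact_mod_cast this

def decN (n : ℕ) (d : ℕ → Bool) (S : Finset ℕ) (ε : ℕ → Bool) (v : ℕ → ℕ) (i : ℕ) : ℕ :=
  2 * v (bi S i) + sigdef n d S ε i

lemma decN_div (n : ℕ) (d : ℕ → Bool) (S : Finset ℕ) (ε : ℕ → Bool) (v : ℕ → ℕ) (i : ℕ) :
    decN n d S ε v i / 2 = v (bi S i) := by
  have := sigdef_le n d S ε i; unfold decN; omega

lemma decN_mod (n : ℕ) (d : ℕ → Bool) (S : Finset ℕ) (ε : ℕ → Bool) (v : ℕ → ℕ) (i : ℕ) :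
    decN n d S ε v i % 2 = sigdef n d S ε i := by
  have := sigdef_le n d S ε i; unfold decN; omega

/-- goodS membership gives the subset property -/
lemma goodS_subset {d : ℕ → Bool} {S : Finset ℕ} (h : S ∈ goodS n d) : S ⊆ range (n-1) := by
  simp only [goodS, mem_filter, mem_powerset] at h; exact h.1

/- ===== decode validity ===== -/

section Decode

variable {d : ℕ → Bool} {S : Finset ℕ}

lemma sig_lt_valley (hn : 1 ≤ n) (hgood : S ∈ goodS n d) (ε : ℕ → Bool) {j i : ℕ} (hj : j ≤ S.card) (hi : i < n) (hbi : bi S i = j)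
    (h : i < istar n d S j) : sigdef n d S ε i = 0 := by
  obtain ⟨hA, hB⟩ := before_valley (goodS_subset hgood) hn hgood hj hi hbi h
  rw [sigdef, if_neg hB, if_pos hA]

lemma sig_gt_valley (hn : 1 ≤ n) (hgood : S ∈ goodS n d) (ε : ℕ → Bool) {j i : ℕ} (hj : j ≤ S.card) (hi : i < n) (hbi : bi S i = j)
    (h : istar n d S j < i) : sigdef n d S ε i = 1 := by
  have hA := after_valley (goodS_subset hgood) hn hj hi hbi h
  rw [sigdef, if_pos hA]

lemma sig_at_valley (hn : 1 ≤ n) (hgood : S ∈ goodS n d) (ε : ℕ → Bool) {j : ℕ} (hj : j ≤ S.card) :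
    sigdef n d S ε (istar n d S j) = if ε j then 1 else 0 := by
  obtain ⟨hB, hA⟩ := valley_free (goodS_subset hgood) hn hgood hj
  rw [sigdef, if_neg hB, if_neg hA, (istar_spec (d := d) (goodS_subset hgood) hn hj).2.1]

lemma dec_valid (hn : 1 ≤ n) (hgood : S ∈ goodS n d) (ε : ℕ → Bool) (v : ℕ → ℕ)
    (hv : ∀ i j : ℕ, i < j → j ≤ S.card → v i < v j) : ∀ s, s + 1 < n → okP d s (decN n d S ε v s) (decN n d S ε v (s+1)) := by
  intro s hs1
  by_cases hsS : s ∈ S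
  · left
    have h1 := bi_succ_of_mem (S := S) hsS
    have h2 := bi_le_card S (s+1)
    have hlt : v (bi S s) < v (bi S (s+1)) := hv _ _ (by omega) (by omega)
    have g1 := sigdef_le n d S ε s
    have g2 := sigdef_le n d S ε (s+1)
    unfold decN; omega
  · have h1 := bi_succ_of_not_mem (S := S) hsS
    set j := bi S s with hjdef
    have hj : j ≤ S.card := bi_le_card S s
    have hspec := istar_spec (d := d) (goodS_subset hgood) hn hj
    have hbs1 : bi S (s+1) = j := h1
    rcases Nat.lt_trichotomy (s+1) (istar n d S j) with hc|hc|hc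
    · -- both strictly before valley
      have e1 := sig_lt_valley hn hgood ε hj (by omega) rfl (by omega)
      have e2 := sig_lt_valley hn hgood ε hj hs1 hbs1 hc
      have hd : d s = true :=
        before_valley_descent (goodS_subset hgood) hn hgood hj (by omega) rfl
      right
      unfold decN
      rw [hbs1, ← hjdef, e1, e2, hd]
      simp
    · -- s+1 is the valley
      have e1 := sig_lt_valley hn hgood ε hj (by omega) rfl (by omega)
      have e2 : sigdef n d S ε (s+1) = if ε j then 1 else 0 := by
        rw [hc]; exact sig_at_valley hn hgood ε hj
      have hd : d s = true :=
        before_valley_descent (goodS_subset hgood) hn hgood hj (by omega) rfl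
      by_cases hε : ε j
      · left; unfold decN; rw [hbs1, ← hjdef, e1, e2, if_pos hε]; omega
      · right; unfold decN; rw [hbs1, ← hjdef, e1, e2, if_neg hε, hd]; simp
    · -- s at or after the valley
      rcases Nat.lt_trichotomy s (istar n d S j) with hc2|hc2|hc2
      · omega
      · -- s is the valley
        have e1 : sigdef n d S ε s = if ε j then 1 else 0 := by
          rw [hc2]; exact sig_at_valley hn hgood ε hj
        have e2 := sig_gt_valley hn hgood ε hj hs1 hbs1 hc
        have hd : d s = false := hspec.2.2 s (by omega) hs1 hbs1
        by_cases hε : ε j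
        · right; unfold decN; rw [hbs1, ← hjdef, e1, e2, if_pos hε, hd]; simp
        · left; unfold decN; rw [hbs1, ← hjdef, e1, e2, if_neg hε]; omega
      · -- both after the valley
        have e1 := sig_gt_valley hn hgood ε hj (by omega) rfl hc2
        have e2 := sig_gt_valley hn hgood ε hj hs1 hbs1 hc
        have hd : d s = false := hspec.2.2 s (by omega) hs1 hbs1
        right; unfold decN; rw [hbs1, ← hjdef, e1, e2, hd]; simp

lemma dec_breaks (ε : ℕ → Bool) (v : ℕ → ℕ)
    (hv : ∀ i j : ℕ, i < j → j ≤ S.card → v i < v j) : ∀ s, s + 1 < n →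
    (decN n d S ε v s / 2 ≠ decN n d S ε v (s+1) / 2 ↔ s ∈ S) := by
  intro s hs1
  rw [decN_div, decN_div]
  by_cases hsS : s ∈ S
  · have h1 := bi_succ_of_mem (S := S) hsS
    have h2 := bi_le_card S (s+1)
    have hlt : v (bi S s) < v (bi S (s+1)) := hv _ _ (by omega) (by omega)
    simp [hsS]; omega
  · have h1 := bi_succ_of_not_mem (S := S) hsS
    rw [h1]; simp [hsS]

end Decode

end Code

section Encode

variable {n k : ℕ} {d : ℕ → Bool} {S : Finset ℕ} {e : Fin n → Fin (2*k)}

lemma eN_lt (e : Fin n → Fin (2*k)) {i : ℕ} (hi : i < n) : eN e i < 2*k := by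
  rw [eN, dif_pos hi]; exact (e ⟨i, hi⟩).isLt

lemma nb_step (hval : validE d e) (hb : breaks e = S) {s : ℕ} (hs : s+1 < n) (hsS : s ∉ S) :
    eN e s / 2 = eN e (s+1) / 2 := by
  have : s ∉ breaks e := hb ▸ hsS
  simp only [breaks, mem_filter, mem_range] at this
  by_contra hne
  exact this ⟨by omega, hne⟩

lemma b_step (hval : validE d e) (hb : breaks e = S) {s : ℕ} (hs : s+1 < n) (hsS : s ∈ S) :
    eN e s / 2 < eN e (s+1) / 2 := by
  have h1 : s ∈ breaks e := hb ▸ hsS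
  simp only [breaks, mem_filter, mem_range] at h1
  rcases hval s hs with h|h <;> omega

lemma bF_mono (hval : validE d e) {i i' : ℕ} (h : i ≤ i') (hi' : i' < n) :
    eN e i / 2 ≤ eN e i' / 2 := by
  induction i', h using Nat.le_induction with
  | base => exact le_rfl
  | succ t ht ih =>
    have h1 : eN e t / 2 ≤ eN e (t+1) / 2 := by
      rcases hval t hi' with h|h <;> omega
    have := ih (by omega)
    omega

lemma bF_block (hval : validE d e) (hb : breaks e = S) {i i' : ℕ} (h : i ≤ i') (hi' : i' < n)
    (hbi : bi S i = bi S i') : eN e i / 2 = eN e i' / 2 := by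
  induction i', h using Nat.le_induction with
  | base => rfl
  | succ t ht ih =>
    have hsw : bi S t = bi S i := bi_sandwich S ht (by omega) hbi
    have htS : t ∉ S := by
      intro hmem
      have := bi_succ_of_mem (S := S) hmem
      have := bi_mono S (show i ≤ t from ht)
      omega
    have h2 := nb_step hval hb hi' htS
    rw [ih (by omega) hsw.symm, h2]

lemma bF_block' (hval : validE d e) (hb : breaks e = S) {i i' : ℕ} (hi : i < n) (hi' : i' < n)
    (hbi : bi S i = bi S i') : eN e i / 2 = eN e i' / 2 := by
  rcases le_total i i' with h|h
  · exact bF_block hval hb h hi' hbi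
  · exact (bF_block hval hb h hi hbi.symm).symm

lemma bF_strict (hval : validE d e) (hb : breaks e = S) {i i' : ℕ} (h : i ≤ i') (hi' : i' < n)
    (hbi : bi S i < bi S i') : eN e i / 2 < eN e i' / 2 := by
  induction i', h using Nat.le_induction with
  | base => omega
  | succ t ht ih =>
    by_cases htS : t ∈ S
    · have h1 := b_step hval hb hi' htS
      have h2 := bF_mono hval ht (by omega)
      omega
    · have h1 := nb_step hval hb hi' htS
      have h2 := bi_succ_of_not_mem (S := S) htS
      have := ih (by omega) (by omega)
      omega

lemma asc_step (hval : validE d e) (hb : breaks e = S) {s : ℕ} (hs : s+1 < n) (hsS : s ∉ S)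
    (hd : d s = false) : eN e (s+1) % 2 = 1 := by
  have h1 := nb_step hval hb hs hsS
  rcases hval s hs with h|h
  · omega
  · rw [hd] at h; simp at h; omega

lemma desc_step (hval : validE d e) (hb : breaks e = S) {s : ℕ} (hs : s+1 < n) (hsS : s ∉ S)
    (hd : d s = true) : eN e s % 2 = 0 := by
  have h1 := nb_step hval hb hs hsS
  rcases hval s hs with h|h
  · omega
  · rw [hd] at h; simp at h; omega

lemma sg_one_step (hval : validE d e) (hb : breaks e = S) {s : ℕ} (hs : s+1 < n) (hsS : s ∉ S)
    (h1 : eN e s % 2 = 1) : eN e (s+1) % 2 = 1 := by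
  have h2 := nb_step hval hb hs hsS
  rcases hval s hs with h|h <;> omega

lemma sg_zero_back (hval : validE d e) (hb : breaks e = S) {s : ℕ} (hs : s+1 < n) (hsS : s ∉ S)
    (h1 : eN e (s+1) % 2 = 0) : eN e s % 2 = 0 := by
  have h2 := nb_step hval hb hs hsS
  rcases hval s hs with h|h <;> omega

/-- a position with an ascent before it in its block has sign `+` -/
lemma sg_of_BeforeA (hval : validE d e) (hb : breaks e = S) {i : ℕ} (hi : i < n)
    (hB : BeforeA d S i) : eN e i % 2 = 1 := by
  obtain ⟨s, hs1, hs2, hs3⟩ := hB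
  have key : ∀ t, s+1 ≤ t → t ≤ i → eN e t % 2 = 1 := by
    intro t ht
    induction t, ht using Nat.le_induction with
    | base =>
      intro _
      exact asc_step hval hb (by omega) (by
        intro hmem
        have := bi_succ_of_mem (S := S) hmem
        have m1 := bi_mono S (show s ≤ i by omega)
        have m2 := bi_mono S (show s+1 ≤ i by omega)
        omega) hs3
    | succ t ht ih =>
      intro hti
      have htS : t ∉ S := by
        intro hmem
        have := bi_succ_of_mem (S := S) hmem
        have m1 := bi_mono S (show s ≤ t by omega)
        have m2 := bi_mono S (show t+1 ≤ i by omega)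
        omega
      exact sg_one_step hval hb (by omega) htS (ih (by omega))
  exact key i hs1 (le_refl _)

/-- a position with a descent after it in its block has sign `-` -/
lemma sg_of_AfterD (hval : validE d e) (hb : breaks e = S) {i : ℕ} (hi : i < n)
    (hA : AfterD n d S i) : eN e i % 2 = 0 := by
  obtain ⟨s, hs1, hs2, hs3, hs4⟩ := hA
  have key : ∀ mm t, i ≤ t → t ≤ s → s - t = mm → eN e t % 2 = 0 := by
    intro mm
    induction mm with
    | zero =>
      intro t h1 h2 h3
      have hts : t = s := by omega
      rw [hts]
      exact desc_step hval hb hs2 (by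
        intro hmem
        have := bi_succ_of_mem (S := S) hmem
        have m1 := bi_mono S (show i ≤ s by omega)
        omega) hs4
    | succ mm ih =>
      intro t h1 h2 h3
      have h4 : eN e (t+1) % 2 = 0 := ih (t+1) (by omega) (by omega) (by omega)
      have htS : t ∉ S := by
        intro hmem
        have := bi_succ_of_mem (S := S) hmem
        have m1 := bi_mono S (show i ≤ t by omega)
        have m2 := bi_mono S (show t+1 ≤ s+1 by omega)
        omega
      exact sg_zero_back hval hb (by omega) htS h4
  exact key (s - i) i (le_refl _) hs1 rfl

/-- valid sequences have good break sets -/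
lemma breaks_good (hval : validE d e) : breaks e ∈ goodS n d := by
  rw [goodS, mem_filter, mem_powerset]
  refine ⟨breaks_subset e, ?_⟩
  intro s hs
  simp only [peaksD, mem_filter, mem_range] at hs
  obtain ⟨hs2, hd1, hd2⟩ := hs
  by_contra hcon
  push_neg at hcon
  have h1 : eN e (s+1) % 2 = 1 := asc_step hval rfl (by omega) hcon.1 hd1
  have h2 : eN e (s+1) % 2 = 0 := desc_step hval rfl (by omega) hcon.2 hd2
  omega

def VOf (e : Fin n → Fin (2*k)) : Finset (Fin k) :=
  univ.image (fun i : Fin n => (⟨(e i : ℕ) / 2, by have := (e i).isLt; omega⟩ : Fin k))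

def epsOf (n : ℕ) (d : ℕ → Bool) (S : Finset ℕ) (e : Fin n → Fin (2*k)) (j : ℕ) : Bool :=
  decide (∃ i, i < n ∧ bi S i = j ∧ ¬ BeforeA d S i ∧ ¬ AfterD n d S i ∧ eN e i % 2 = 1)

lemma epsOf_iff (hn : 1 ≤ n) (hgood : S ∈ goodS n d) {j : ℕ} (hj : j ≤ S.card) :
    (epsOf n d S e j = true ↔ eN e (istar n d S j) % 2 = 1) := by
  rw [epsOf, decide_eq_true_iff]
  constructor
  · rintro ⟨i, hi, hbi, hB, hA, hsg⟩
    rwa [free_unique (goodS_subset hgood) hn hgood hj hi hbi ⟨hB, hA⟩] at hsg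
  · intro hsg
    have hspec := istar_spec (d := d) (goodS_subset hgood) hn hj
    obtain ⟨hB, hA⟩ := valley_free (goodS_subset hgood) hn hgood hj
    exact ⟨_, hspec.1, hspec.2.1, hB, hA, hsg⟩

/-- the image of a valid sequence equals the `vfun` of its value set -/
lemma enc_values (hn : 1 ≤ n) (hval : validE d e) (hb : breaks e = S) :
    (VOf e).card = S.card + 1 ∧
      ∀ i, i < n → eN e i / 2 = vfun (VOf e) (S.card + 1) (bi S i) := by
  have hS : S ⊆ range (n-1) := hb ▸ breaks_subset e
  set m := S.card + 1 with hm
  have histar : ∀ j : Fin m, istar n d S (j : ℕ) < n := fun j =>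
    (istar_spec (d := d) hS hn (by omega : (j:ℕ) ≤ S.card)).1
  have hbistar : ∀ j : Fin m, bi S (istar n d S (j : ℕ)) = (j : ℕ) := fun j =>
    (istar_spec (d := d) hS hn (by omega : (j:ℕ) ≤ S.card)).2.1
  set G : Fin m → Fin k := fun j =>
    ⟨eN e (istar n d S (j : ℕ)) / 2, by have := eN_lt e (histar j); omega⟩ with hG
  have hGmono : StrictMono G := by
    intro j j' hjj
    have h1 : istar n d S (j : ℕ) < istar n d S (j' : ℕ) := by
      by_contra hcon
      push_neg at hcon
      have := bi_mono S hcon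
      rw [hbistar j, hbistar j'] at this
      omega
    have := bF_strict hval hb (le_of_lt h1) (histar j') (by rw [hbistar j, hbistar j']; exact hjj)
    exact this
  have hGmem : ∀ x, G x ∈ VOf e := by
    intro j
    rw [VOf, mem_image]
    refine ⟨⟨istar n d S (j : ℕ), histar j⟩, mem_univ _, ?_⟩
    apply Fin.ext
    simp [hG, eN, histar j]
  have himg : VOf e = image G univ := by
    apply Finset.Subset.antisymm
    · intro x hx
      rw [VOf, mem_image] at hx
      obtain ⟨i, _, hix⟩ := hx
      rw [mem_image]
      have hbi : bi S (i : ℕ) < m := by have := bi_le_card S (i : ℕ); omega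
      refine ⟨⟨bi S (i : ℕ), hbi⟩, mem_univ _, ?_⟩
      rw [← hix]
      apply Fin.ext
      have heq : eN e (istar n d S (bi S (i:ℕ))) / 2 = eN e (i : ℕ) / 2 := by
        apply bF_block' hval hb (histar ⟨bi S (i:ℕ), hbi⟩) i.isLt
        rw [hbistar ⟨bi S (i:ℕ), hbi⟩]
      simp only [hG]
      rw [heq]
      simp [eN, i.isLt]
    · intro x hx
      rw [mem_image] at hx
      obtain ⟨j, _, hjx⟩ := hx
      rw [← hjx]
      exact hGmem j
  have hcard : (VOf e).card = m := by
    rw [himg, card_image_of_injective univ hGmono.injective, card_univ, Fintype.card_fin]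
  refine ⟨hcard, ?_⟩
  intro i hi
  have hemb : G = (VOf e).orderEmbOfFin hcard := orderEmbOfFin_unique hcard hGmem hGmono
  have hbi : bi S i < m := by have := bi_le_card S i; omega
  rw [vfun, dif_pos ⟨hcard, hbi⟩, ← hemb]
  simp only [hG]
  apply bF_block' hval hb hi (histar ⟨bi S i, hbi⟩)
  rw [hbistar ⟨bi S i, hbi⟩]

end Encode

section Fiber

variable {n k : ℕ} {d : ℕ → Bool} {S : Finset ℕ}

/-- total decode function (values taken mod `2k` to stay in range) -/
def decF (n k : ℕ) (hk : 0 < k) (d : ℕ → Bool) (S : Finset ℕ) (ε : ℕ → Bool) (v : ℕ → ℕ) :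
    Fin n → Fin (2*k) :=
  fun i => ⟨decN n d S ε v (i : ℕ) % (2*k), Nat.mod_lt _ (by omega)⟩

lemma eN_decF (hk : 0 < k) (ε : ℕ → Bool) (v : ℕ → ℕ)
    (hvk : ∀ j, j ≤ S.card → v j < k) {i : ℕ} (hi : i < n) :
    eN (decF n k hk d S ε v) i = decN n d S ε v i := by
  rw [eN, dif_pos hi]
  show decN n d S ε v i % (2*k) = decN n d S ε v i
  have h1 := hvk (bi S i) (bi_le_card S i)
  have h2 := sigdef_le n d S ε i
  apply Nat.mod_eq_of_lt
  unfold decN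
  omega

lemma fiber_card (hn : 1 ≤ n) (hgood : S ∈ goodS n d) :
    ((univ : Finset (Fin n → Fin (2*k))).filter
        (fun e => validE d e ∧ breaks e = S)).card
      = 2^(S.card+1) * k.choose (S.card+1) := by
  have hS : S ⊆ range (n-1) := goodS_subset hgood
  rcases Nat.eq_zero_or_pos k with hk0|hkpos
  · subst hk0
    have h1 : ((univ : Finset (Fin n → Fin (2*0))).filter
        (fun e => validE d e ∧ breaks e = S)) = ∅ := by
      apply eq_empty_of_forall_notMem
      intro e _
      exact absurd (e ⟨0, hn⟩).isLt (by omega)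
    rw [h1, card_empty, Nat.choose_eq_zero_of_lt (by omega), mul_zero]
  set m := S.card + 1 with hm
  have htarget : 2^m * k.choose m = ((univ : Finset (Fin m → Bool)) ×ˢ
      (univ : Finset (Fin k)).powersetCard m).card := by
    rw [card_product, card_powersetCard, card_univ, card_univ, Fintype.card_fin,
      Fintype.card_fun, Fintype.card_bool, Fintype.card_fin]
  rw [htarget]
  apply Finset.card_bij'
    (i := fun e _ => ((fun j : Fin m => epsOf n d S e (j : ℕ)), VOf e))
    (j := fun p _ => decF n k hkpos d S
      (fun jj => if h : jj < m then p.1 ⟨jj, h⟩ else false) (vfun p.2 m))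
  · -- encode lands in target
    intro e he
    rw [mem_filter] at he
    obtain ⟨_, hval, hb⟩ := he
    rw [mem_product]
    exact ⟨mem_univ _, mem_powersetCard_univ.2 (enc_values hn hval hb).1⟩
  · -- decode lands in fiber
    intro p hp
    rw [mem_product, mem_powersetCard_univ] at hp
    set ε : ℕ → Bool := fun jj => if h : jj < m then p.1 ⟨jj, h⟩ else false with hε
    set v : ℕ → ℕ := fun j => vfun p.2 m j with hv
    have hvk : ∀ j, j ≤ S.card → v j < k := fun j hj => vfun_lt hp.2 (by omega)
    have hvmono : ∀ i j : ℕ, i < j → j ≤ S.card → v i < v j :=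
      fun i j hij hj => vfun_strictMono hp.2 hij (by omega)
    rw [mem_filter]
    refine ⟨mem_univ _, ?_, ?_⟩
    · intro s hs
      rw [eN_decF hkpos ε v hvk (by omega), eN_decF hkpos ε v hvk hs]
      exact dec_valid hn hgood ε v hvmono s hs
    · ext s
      simp only [breaks, mem_filter, mem_range]
      constructor
      · rintro ⟨hs, hne⟩
        have hs1 : s + 1 < n := by omega
        rw [eN_decF hkpos ε v hvk (by omega), eN_decF hkpos ε v hvk hs1] at hne
        exact (dec_breaks ε v hvmono s hs1).1 hne
      · intro hsS
        have hs : s < n - 1 := mem_range.1 (hS hsS)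
        have hs1 : s + 1 < n := by omega
        refine ⟨hs, ?_⟩
        rw [eN_decF hkpos ε v hvk (by omega), eN_decF hkpos ε v hvk hs1]
        exact (dec_breaks ε v hvmono s hs1).2 hsS
  · -- decode ∘ encode = id
    intro e he
    rw [mem_filter] at he
    obtain ⟨_, hval, hb⟩ := he
    set ε : ℕ → Bool := fun jj => if h : jj < m then epsOf n d S e jj else false with hε
    have hεeq : ∀ jj, jj ≤ S.card → ε jj = epsOf n d S e jj := by
      intro jj hjj; rw [hε]; simp only; rw [dif_pos (by omega : jj < m)]
    obtain ⟨hcard, hvals⟩ := enc_values hn hval hb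
    set v : ℕ → ℕ := fun j => vfun (VOf e) m j with hv
    have hvk : ∀ j, j ≤ S.card → v j < k := fun j hj => vfun_lt hcard (by omega)
    funext i
    apply Fin.ext
    show decN n d S ε v (i:ℕ) % (2*k) = ((e i : ℕ))
    have hieq : eN e (i : ℕ) = (e i : ℕ) := by rw [eN, dif_pos i.isLt]
    have hj : bi S (i:ℕ) ≤ S.card := bi_le_card S _
    have hsig : sigdef n d S ε (i:ℕ) = eN e (i:ℕ) % 2 := by
      rcases Nat.lt_trichotomy (i:ℕ) (istar n d S (bi S (i:ℕ))) with hc|hc|hc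
      · rw [sig_lt_valley hn hgood ε hj i.isLt rfl hc]
        have hA := (before_valley hS hn hgood hj i.isLt rfl hc).1
        rw [sg_of_AfterD hval hb i.isLt hA]
      · have h2 := sig_at_valley hn hgood ε hj
        rw [← hc] at h2
        rw [h2, hεeq _ hj]
        have hiff := epsOf_iff (e := e) hn hgood hj
        rw [← hc] at hiff
        by_cases hsg : eN e (i:ℕ) % 2 = 1
        · rw [if_pos (hiff.2 hsg), hsg]
        · rw [if_neg (fun hcon => hsg (hiff.1 hcon))]
          omega
      · rw [sig_gt_valley hn hgood ε hj i.isLt rfl hc]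
        have hB := after_valley hS hn hj i.isLt rfl hc
        rw [sg_of_BeforeA hval hb i.isLt hB]
    have hval2 : v (bi S (i:ℕ)) = eN e (i:ℕ) / 2 := (hvals _ i.isLt).symm
    have hlt : eN e (i:ℕ) < 2*k := eN_lt e i.isLt
    have hfinal : decN n d S ε v (i:ℕ) = eN e (i:ℕ) := by
      unfold decN
      rw [hsig, hval2]
      omega
    rw [hfinal, hieq]
    exact Nat.mod_eq_of_lt (hieq ▸ hlt)
  · -- encode ∘ decode = id
    intro p hp
    rw [mem_product, mem_powersetCard_univ] at hp
    set ε : ℕ → Bool := fun jj => if h : jj < m then p.1 ⟨jj, h⟩ else false with hε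
    set v : ℕ → ℕ := fun j => vfun p.2 m j with hv
    have hvk : ∀ j, j ≤ S.card → v j < k := fun j hj => vfun_lt hp.2 (by omega)
    have hD : ∀ i : ℕ, i < n → eN (decF n k hkpos d S ε v) i = decN n d S ε v i :=
      fun i hi => eN_decF hkpos ε v hvk hi
    have hεj : ∀ jj (h : jj < m), ε jj = p.1 ⟨jj, h⟩ := by
      intro jj h
      show (if h' : jj < m then p.1 ⟨jj, h'⟩ else false) = _
      rw [dif_pos h]
    have hvj : ∀ jj (h : jj < m), v jj = (p.2.orderEmbOfFin hp.2 ⟨jj, h⟩ : ℕ) := by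
      intro jj h
      show vfun p.2 m jj = _
      rw [vfun, dif_pos ⟨hp.2, h⟩]
    apply Prod.ext
    · funext j
      show epsOf n d S (decF n k hkpos d S ε v) (j:ℕ) = p.1 j
      have hj : (j:ℕ) ≤ S.card := by have := j.isLt; omega
      have hspec := istar_spec (d := d) hS hn hj
      have hsig : eN (decF n k hkpos d S ε v) (istar n d S (j:ℕ)) % 2
          = if p.1 j then 1 else 0 := by
        rw [hD _ hspec.1, decN_mod, sig_at_valley hn hgood ε hj, hεj (j:ℕ) j.isLt]
      rcases Bool.eq_false_or_eq_true (p.1 j) with hpj|hpj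
      · rw [hpj]
        rw [hpj] at hsig
        simp at hsig
        rw [epsOf, decide_eq_true_iff]
        obtain ⟨hBf, hAf⟩ := valley_free hS hn hgood hj
        exact ⟨_, hspec.1, hspec.2.1, hBf, hAf, hsig⟩
      · rw [hpj]
        rw [hpj] at hsig
        simp at hsig
        rw [epsOf, decide_eq_false_iff_not]
        rintro ⟨i2, hi2, hbi2, hB2, hA2, hm2⟩
        rw [free_unique hS hn hgood hj hi2 hbi2 ⟨hB2, hA2⟩] at hm2
        omega
    · show VOf (decF n k hkpos d S ε v) = p.2
      ext x
      rw [VOf, mem_image]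
      constructor
      · rintro ⟨i, _, hix⟩
        have hdiv : (decF n k hkpos d S ε v i : ℕ) / 2 = v (bi S (i:ℕ)) := by
          have := hD (i:ℕ) i.isLt
          rw [eN, dif_pos i.isLt] at this
          simp only [Fin.eta] at this
          rw [this, decN_div]
        have hbi : bi S (i:ℕ) < m := by have := bi_le_card S (i:ℕ); omega
        have : x = p.2.orderEmbOfFin hp.2 ⟨bi S (i:ℕ), hbi⟩ := by
          rw [← hix]
          apply Fin.ext
          show (decF n k hkpos d S ε v i : ℕ) / 2 = _
          rw [hdiv, hvj _ hbi]
        rw [this]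
        exact orderEmbOfFin_mem p.2 hp.2 _
      · intro hx
        have : ∃ j2 : Fin m, p.2.orderEmbOfFin hp.2 j2 = x := by
          have hr := range_orderEmbOfFin p.2 hp.2
          have : x ∈ Set.range (p.2.orderEmbOfFin hp.2) := by rw [hr]; exact hx
          exact this
        obtain ⟨j2, hj2⟩ := this
        obtain ⟨i2, hi2, hbi2⟩ := bi_reach hS hn (show (j2:ℕ) ≤ S.card by have := j2.isLt; omega)
        refine ⟨⟨i2, hi2⟩, mem_univ _, ?_⟩
        apply Fin.ext
        show (decF n k hkpos d S ε v ⟨i2, hi2⟩ : ℕ) / 2 = (x : ℕ)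
        have := hD i2 hi2
        rw [eN, dif_pos hi2] at this
        rw [this, decN_div, hbi2, hvj _ j2.isLt, ← hj2]

lemma countE (hn : 1 ≤ n) (d : ℕ → Bool) :
    ((univ : Finset (Fin n → Fin (2*k))).filter (validE d)).card
      = ∑ S ∈ goodS n d, 2^(S.card+1) * k.choose (S.card+1) := by
  rw [card_eq_sum_card_fiberwise
    (f := breaks) (t := goodS n d)
    (fun e he => breaks_good (mem_filter.1 he).2)]
  apply sum_congr rfl
  intro S hSg
  rw [← fiber_card hn hSg, filter_filter]

end Fiber

section Sums

lemma sum_pow_powerset {R : Type*} [CommRing R] (y : R) (U : Finset ℕ) :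
    ∑ S ∈ U.powerset, y^S.card = (1+y)^U.card := by
  calc ∑ S ∈ U.powerset, y^S.card
      = ∑ S ∈ U.powerset, (∏ _i ∈ S, y) * ∏ _i ∈ U \ S, (1:R) := by
        apply sum_congr rfl; intro S _; rw [prod_const, prod_const_one, mul_one]
    _ = ∏ _i ∈ U, (y + 1) := (Finset.prod_add _ _ _).symm
    _ = (1+y)^U.card := by rw [prod_const, add_comm]

lemma hits_card_le : ∀ (P U : Finset ℕ), (∀ s ∈ P, s ∈ U ∧ s+1 ∈ U) →
    (∀ s ∈ P, ∀ t ∈ P, s ≠ t → s ≠ t+1 ∧ t ≠ s+1) → 2 * P.card ≤ U.card := by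
  intro P
  induction P using Finset.induction_on with
  | empty => intro U _ _; simp
  | @insert a Pq ha ih =>
    intro U hPU hd
    have haU := hPU a (mem_insert_self _ _)
    have hsub : {a, a+1} ⊆ U := by
      intro x hx; rcases mem_insert.1 hx with h|h
      · subst h; exact haU.1
      · rw [mem_singleton.1 h]; exact haU.2
    have hq : ∀ s ∈ Pq, s ∈ U \ {a, a+1} ∧ s+1 ∈ U \ {a, a+1} := by
      intro s hs
      have hsP : s ∈ insert a Pq := mem_insert_of_mem hs
      have hne : s ≠ a := fun h => ha (h ▸ hs)
      have hd2 := hd s hsP a (mem_insert_self _ _) hne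
      obtain ⟨h1, h2⟩ := hPU s hsP
      constructor <;> rw [mem_sdiff]
      · refine ⟨h1, ?_⟩
        intro hx; rcases mem_insert.1 hx with h|h
        · exact hne h
        · exact hd2.1 (mem_singleton.1 h)
      · refine ⟨h2, ?_⟩
        intro hx; rcases mem_insert.1 hx with h|h
        · exact hd2.2 h.symm
        · have := mem_singleton.1 h; omega
    have hdq : ∀ s ∈ Pq, ∀ t ∈ Pq, s ≠ t → s ≠ t+1 ∧ t ≠ s+1 := fun s hs t ht hst =>
      hd s (mem_insert_of_mem hs) t (mem_insert_of_mem ht) hst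
    have hih := ih (U \ {a, a+1}) hq hdq
    have hcs : (U \ {a, a+1}).card = U.card - 2 := by
      rw [card_sdiff_of_subset hsub, card_pair (by omega)]
    have h2U : 2 ≤ U.card := by
      calc 2 = ({a, a+1} : Finset ℕ).card := (card_pair (by omega)).symm
      _ ≤ U.card := card_le_card hsub
    rw [card_insert_of_notMem ha]
    omega

lemma sum_pow_hits {R : Type*} [CommRing R] (y : R) :
    ∀ (P U : Finset ℕ), (∀ s ∈ P, s ∈ U ∧ s+1 ∈ U) →
    (∀ s ∈ P, ∀ t ∈ P, s ≠ t → s ≠ t+1 ∧ t ≠ s+1) →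
    ∑ S ∈ U.powerset.filter (fun S => ∀ s ∈ P, s ∈ S ∨ s+1 ∈ S), y^S.card
      = (y^2 + 2*y)^P.card * (1+y)^(U.card - 2*P.card) := by
  intro P
  induction P using Finset.induction_on with
  | empty =>
    intro U _ _
    rw [filter_true_of_mem (by intro _ _ s hs; exact absurd hs (notMem_empty s))]
    simp only [card_empty, pow_zero, one_mul, Nat.mul_zero, Nat.sub_zero]
    exact sum_pow_powerset y U
  | @insert a Pq ha ih =>
    intro U hPU hd
    have haU := hPU a (mem_insert_self _ _)
    have hane : a ≠ a + 1 := by omega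
    have hsub : {a, a+1} ⊆ U := by
      intro x hx; rcases mem_insert.1 hx with h|h
      · subst h; exact haU.1
      · rw [mem_singleton.1 h]; exact haU.2
    have hq : ∀ s ∈ Pq, s ∈ U \ {a, a+1} ∧ s+1 ∈ U \ {a, a+1} := by
      intro s hs
      have hsP : s ∈ insert a Pq := mem_insert_of_mem hs
      have hne : s ≠ a := fun h => ha (h ▸ hs)
      have hd2 := hd s hsP a (mem_insert_self _ _) hne
      obtain ⟨h1, h2⟩ := hPU s hsP
      constructor <;> rw [mem_sdiff]
      · refine ⟨h1, ?_⟩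
        intro hx; rcases mem_insert.1 hx with h|h
        · exact hne h
        · exact hd2.1 (mem_singleton.1 h)
      · refine ⟨h2, ?_⟩
        intro hx; rcases mem_insert.1 hx with h|h
        · exact hd2.2 h.symm
        · have := mem_singleton.1 h; omega
    have hdq : ∀ s ∈ Pq, ∀ t ∈ Pq, s ≠ t → s ≠ t+1 ∧ t ≠ s+1 := fun s hs t ht hst =>
      hd s (mem_insert_of_mem hs) t (mem_insert_of_mem ht) hst
    have key : ∑ S ∈ U.powerset.filter (fun S => ∀ s ∈ insert a Pq, s ∈ S ∨ s+1 ∈ S), y^S.card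
        = ∑ q ∈ (({a, a+1} : Finset ℕ).powerset.filter (fun T => a ∈ T ∨ a+1 ∈ T)) ×ˢ
            ((U \ {a, a+1}).powerset.filter (fun S => ∀ s ∈ Pq, s ∈ S ∨ s+1 ∈ S)),
            y^(q.1.card + q.2.card) := by
      apply sum_nbij' (i := fun S => (S ∩ {a, a+1}, S \ {a, a+1}))
        (j := fun q => q.1 ∪ q.2)
      · -- forward membership
        intro S hS
        simp only [mem_filter, mem_powerset] at hS
        obtain ⟨hSU, hhits⟩ := hS
        simp only [mem_product, mem_filter, mem_powerset]
        refine ⟨⟨inter_subset_right, ?_⟩, ?_, ?_⟩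
        · rcases hhits a (mem_insert_self _ _) with h|h
          · left; rw [mem_inter]; exact ⟨h, mem_insert_self _ _⟩
          · right; rw [mem_inter]; exact ⟨h, mem_insert.2 (Or.inr (mem_singleton_self _))⟩
        · exact sdiff_subset_sdiff hSU (le_refl _)
        · intro s hs
          have hsP : s ∈ insert a Pq := mem_insert_of_mem hs
          have hne : s ≠ a := fun h => ha (h ▸ hs)
          have hd2 := hd s hsP a (mem_insert_self _ _) hne
          rcases hhits s hsP with h|h
          · left; rw [mem_sdiff]
            refine ⟨h, ?_⟩
            intro hx; rcases mem_insert.1 hx with h'|h'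
            · exact hne h'
            · exact hd2.1 (mem_singleton.1 h')
          · right; rw [mem_sdiff]
            refine ⟨h, ?_⟩
            intro hx; rcases mem_insert.1 hx with h'|h'
            · exact hd2.2 h'.symm
            · have := mem_singleton.1 h'; omega
      · -- backward membership
        intro q hq2
        simp only [mem_product, mem_filter, mem_powerset] at hq2
        obtain ⟨⟨hq1sub, hq1hit⟩, hq2sub, hq2hit⟩ := hq2
        simp only [mem_filter, mem_powerset]
        constructor
        · exact union_subset (hq1sub.trans hsub) (hq2sub.trans sdiff_subset)
        · intro s hs
          rcases mem_insert.1 hs with h|h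
          · subst h
            rcases hq1hit with h|h
            · exact Or.inl (mem_union_left _ h)
            · exact Or.inr (mem_union_left _ h)
          · rcases hq2hit s h with h'|h'
            · exact Or.inl (mem_union_right _ h')
            · exact Or.inr (mem_union_right _ h')
      · -- left inverse
        intro S hS
        simp only
        ext x
        simp only [mem_union, mem_inter, mem_sdiff]
        tauto
      · -- right inverse
        intro q hq2
        simp only [mem_product, mem_filter, mem_powerset] at hq2
        obtain ⟨⟨hq1sub, _⟩, hq2sub, _⟩ := hq2
        have hdisj : ∀ x ∈ q.2, x ∉ ({a, a+1} : Finset ℕ) := by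
          intro x hx
          exact (mem_sdiff.1 (hq2sub hx)).2
        have hin : ∀ x ∈ q.1, x ∈ ({a, a+1} : Finset ℕ) := fun x hx => hq1sub hx
        have e1 : (q.1 ∪ q.2) ∩ {a, a+1} = q.1 := by
          ext x
          simp only [mem_inter, mem_union]
          constructor
          · rintro ⟨h|h, hp⟩
            · exact h
            · exact absurd hp (hdisj x h)
          · intro h; exact ⟨Or.inl h, hin x h⟩
        have e2 : (q.1 ∪ q.2) \ {a, a+1} = q.2 := by
          ext x
          simp only [mem_sdiff, mem_union]
          constructor
          · rintro ⟨h|h, hp⟩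
            · exact absurd (hin x h) hp
            · exact h
          · intro h; exact ⟨Or.inr h, hdisj x h⟩
        rw [e1, e2]
      · -- weights agree
        intro S hS
        simp only
        rw [← card_inter_add_card_sdiff S {a, a+1}, pow_add]
    rw [key, Finset.sum_product]
    simp_rw [pow_add]
    rw [← sum_mul_sum]
    have hA : ∑ T ∈ (({a, a+1} : Finset ℕ).powerset.filter (fun T => a ∈ T ∨ a+1 ∈ T)),
        y^T.card = y^2 + 2*y := by
      have hsplit := sum_filter_add_sum_filter_not (({a, a+1} : Finset ℕ).powerset)
        (fun T => a ∈ T ∨ a+1 ∈ T) (fun T => y^T.card)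
      have hnull : (({a, a+1} : Finset ℕ).powerset.filter (fun T => ¬(a ∈ T ∨ a+1 ∈ T)))
          = {∅} := by
        ext T
        simp only [mem_filter, mem_powerset, mem_singleton]
        constructor
        · rintro ⟨hsub', hno⟩
          push_neg at hno
          ext x
          simp only [notMem_empty, iff_false]
          intro hx
          have := hsub' hx
          rcases mem_insert.1 this with h|h
          · exact hno.1 (h ▸ hx)
          · exact hno.2 ((mem_singleton.1 h) ▸ hx)
        · rintro rfl
          exact ⟨empty_subset _, by simp⟩
      have hfull := sum_pow_powerset y ({a, a+1} : Finset ℕ)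
      rw [card_pair (by omega)] at hfull
      rw [hnull, sum_singleton, card_empty, pow_zero] at hsplit
      have : ∑ T ∈ (({a, a+1} : Finset ℕ).powerset.filter (fun T => a ∈ T ∨ a+1 ∈ T)),
          y^T.card = (1+y)^2 - 1 := by
        rw [← hfull, ← hsplit]; ring
      rw [this]; ring
    rw [hA, ih (U \ {a, a+1}) hq hdq]
    have hcs : (U \ {a, a+1}).card = U.card - 2 := by
      rw [card_sdiff_of_subset hsub, card_pair (by omega)]
    have h2U := hits_card_le Pq (U \ {a, a+1}) hq hdq
    have h2U' : 2 ≤ U.card := by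
      calc 2 = ({a, a+1} : Finset ℕ).card := (card_pair (by omega)).symm
      _ ≤ U.card := card_le_card hsub
    rw [card_insert_of_notMem ha, hcs]
    have hexp : U.card - 2 - 2 * Pq.card = U.card - 2 * (Pq.card + 1) := by omega
    rw [hexp]
    ring

lemma peaksD_mem_pairs {n : ℕ} {d : ℕ → Bool} :
    ∀ s ∈ peaksD n d, s ∈ range (n-1) ∧ s+1 ∈ range (n-1) := by
  intro s hs
  rw [peaksD, mem_filter, mem_range] at hs
  constructor <;> rw [mem_range] <;> omega

lemma peaksD_disj {n : ℕ} {d : ℕ → Bool} :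
    ∀ s ∈ peaksD n d, ∀ t ∈ peaksD n d, s ≠ t → s ≠ t+1 ∧ t ≠ s+1 := by
  intro s hs t ht _
  rw [peaksD, mem_filter] at hs ht
  constructor
  · intro h
    subst h
    have h1 := hs.2.1
    have h2 := ht.2.2
    simp_all
  · intro h
    subst h
    have h1 := ht.2.1
    have h2 := hs.2.2
    simp_all
lemma goodS_sum {R : Type*} [CommRing R] (y : R) (n : ℕ) (d : ℕ → Bool) :
    ∑ S ∈ goodS n d, y^S.card
      = (y^2 + 2*y)^(peaksD n d).card * (1+y)^(n-1-2*(peaksD n d).card) := by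
  have h := sum_pow_hits y (peaksD n d) (range (n-1)) peaksD_mem_pairs peaksD_disj
  rw [card_range] at h
  rw [goodS]
  refine Eq.trans ?_ h
  apply Finset.sum_congr
  · ext S
    simp only [mem_filter]
  · intros; rfl

lemma peaks_card_le (n : ℕ) (d : ℕ → Bool) : 2 * (peaksD n d).card ≤ n - 1 := by
  have := hits_card_le (peaksD n d) (range (n-1)) peaksD_mem_pairs peaksD_disj
  rwa [card_range] at this

end Sums

section PS
open PowerSeries

lemma mk_choose_mul (m : ℕ) :
    (PowerSeries.mk fun kk => ((kk.choose m : ℕ) : ℚ)) * (1 - X)^(m+1) = X^m := by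
  induction m with
  | zero =>
    rw [pow_one, pow_zero, mul_sub, mul_one]
    ext nn
    rw [map_sub]
    cases nn with
    | zero => simp
    | succ t => rw [coeff_succ_mul_X]; simp
  | succ m ih =>
    have hstep : (PowerSeries.mk fun kk => ((kk.choose (m+1) : ℕ) : ℚ)) * (1 - X)
        = X * PowerSeries.mk fun kk => ((kk.choose m : ℕ) : ℚ) := by
      rw [mul_sub, mul_one]
      ext nn
      rw [map_sub]
      cases nn with
      | zero => simp
      | succ t =>
        rw [coeff_succ_mul_X, coeff_succ_X_mul]
        simp only [coeff_mk]
        rw [Nat.choose_succ_succ]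
        push_cast
        ring
    calc (PowerSeries.mk fun kk => ((kk.choose (m+1) : ℕ) : ℚ)) * (1 - X)^(m+1+1)
        = ((PowerSeries.mk fun kk => ((kk.choose (m+1) : ℕ) : ℚ)) * (1 - X)) * (1-X)^(m+1) := by
          ring
      _ = X * ((PowerSeries.mk fun kk => ((kk.choose m : ℕ) : ℚ)) * (1-X)^(m+1)) := by
          rw [hstep]; ring
      _ = X * X^m := by rw [ih]
      _ = X^(m+1) := by ring

lemma one_sub_X_ne : (1 - X : PowerSeries ℚ) ≠ 0 := by
  intro h
  have : constantCoeff (R := ℚ) (1 - X) = 0 := by rw [h]; simp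
  simp at this

lemma one_add_X_ne : (1 + X : PowerSeries ℚ) ≠ 0 := by
  intro h
  have : constantCoeff (R := ℚ) (1 + X) = 0 := by rw [h]; simp
  simp at this

theorem gf_formula {n : ℕ} (hn : 1 ≤ n) (d : ℕ → Bool) :
    (2 : PowerSeries ℚ) * PowerSeries.mk (fun kk =>
        ((∑ S ∈ goodS n d, 2^(S.card+1) * kk.choose (S.card+1) : ℕ) : ℚ))
      = (1 + X)^(n+1) * ((1 - X)^(n+1))⁻¹
          * (4 * X * (((1 + X)^2)⁻¹))^((peaksD n d).card + 1) := by
  classical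
  set p := (peaksD n d).card with hp
  set e := n - 1 - 2*p with he
  have hple : 2*p ≤ n - 1 := peaks_card_le n d
  have i1 : (1 - X : PowerSeries ℚ)⁻¹ * (1 - X) = 1 :=
    PowerSeries.inv_mul_cancel _ (by simp)
  set I : PowerSeries ℚ := (1 - X)⁻¹ with hI
  have hXI : X * I + 1 = I := by linear_combination -i1
  -- step 1 : the power series as a finite sum
  have hmk : PowerSeries.mk (fun kk =>
        ((∑ S ∈ goodS n d, 2^(S.card+1) * kk.choose (S.card+1) : ℕ) : ℚ))
      = ∑ S ∈ goodS n d, (C (R := ℚ)) ((2:ℚ)^(S.card+1)) *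
          PowerSeries.mk (fun kk => ((kk.choose (S.card+1) : ℕ) : ℚ)) := by
    ext nn
    rw [coeff_mk, map_sum]
    push_cast
    apply Finset.sum_congr rfl
    intro S _
    rw [coeff_C_mul, coeff_mk]
  -- step 2 : closed form of each summand
  have hinv : ∀ m : ℕ, (PowerSeries.mk fun kk => ((kk.choose m : ℕ) : ℚ)) = X^m * I^(m+1) := by
    intro m
    have h2 : (1-X : PowerSeries ℚ)^(m+1) * I^(m+1) = 1 := by
      rw [← mul_pow, mul_comm, i1, one_pow]
    calc (PowerSeries.mk fun kk => ((kk.choose m : ℕ) : ℚ))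
        = (PowerSeries.mk fun kk => ((kk.choose m : ℕ) : ℚ)) * ((1-X)^(m+1) * I^(m+1)) := by
          rw [h2, mul_one]
      _ = ((PowerSeries.mk fun kk => ((kk.choose m : ℕ) : ℚ)) * (1-X)^(m+1)) * I^(m+1) := by
          ring
      _ = X^m * I^(m+1) := by rw [mk_choose_mul]
  have hterm : ∀ m : ℕ, (C (R := ℚ)) ((2:ℚ)^(m+1)) *
      (PowerSeries.mk fun kk => ((kk.choose (m+1) : ℕ) : ℚ))
      = I * (2*X*I) * (2*X*I)^m := by
    intro m
    rw [hinv (m+1)]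
    have hC2 : (C (R := ℚ)) ((2:ℚ)^(m+1)) = (2 : PowerSeries ℚ)^(m+1) := by
      rw [map_pow, map_ofNat]
    rw [hC2]
    ring
  -- step 3 : sum it up
  have hsum : (2 : PowerSeries ℚ) * PowerSeries.mk (fun kk =>
        ((∑ S ∈ goodS n d, 2^(S.card+1) * kk.choose (S.card+1) : ℕ) : ℚ))
      = 2 * I * (2*X*I) * (((2*X*I)^2 + 2*(2*X*I))^p * (1 + 2*X*I)^e) := by
    rw [hmk, Finset.mul_sum]
    have : ∀ S ∈ goodS n d, (2:PowerSeries ℚ) * ((C (R := ℚ)) ((2:ℚ)^(S.card+1)) *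
        PowerSeries.mk (fun kk => ((kk.choose (S.card+1) : ℕ) : ℚ)))
        = (2 * I * (2*X*I)) * (2*X*I)^S.card := by
      intro S _
      rw [hterm S.card]
      ring
    rw [Finset.sum_congr rfl this, ← Finset.mul_sum, goodS_sum (2*X*I) n d, ← hp, ← he]
  rw [hsum]
  -- step 4 : cancel denominators
  have hkey1 : ((2*X*I)^2 + 2*(2*X*I)) = 4*X*I^2 := by linear_combination (4*X*I) * hXI
  have hkey2 : (1 + 2*X*I : PowerSeries ℚ) = (1+X) * I := by linear_combination hXI
  have hDne : ((1-X : PowerSeries ℚ)^(n+1) * (1+X)^(2*p+2)) ≠ 0 :=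
    mul_ne_zero (pow_ne_zero _ one_sub_X_ne) (pow_ne_zero _ one_add_X_ne)
  apply mul_right_cancel₀ hDne
  have hIP : I^(n+1) * (1-X)^(n+1) = 1 := by rw [← mul_pow, i1, one_pow]
  have hJ : ((1-X : PowerSeries ℚ)^(n+1))⁻¹ * (1-X)^(n+1) = 1 :=
    PowerSeries.inv_mul_cancel _ (by simp)
  have hK : (((1+X : PowerSeries ℚ)^2)⁻¹) * (1+X)^2 = 1 :=
    PowerSeries.inv_mul_cancel _ (by simp)
  have e2 : 2 + 2*p + e = n+1 := by omega
  have e3 : e + (2*p+2) = n+1 := by omega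
  calc 2 * I * (2*X*I) * (((2*X*I)^2 + 2*(2*X*I))^p * (1 + 2*X*I)^e)
        * ((1-X)^(n+1) * (1+X)^(2*p+2))
      = 2 * I * (2*X*I) * ((4*X*I^2)^p * ((1+X)*I)^e)
        * ((1-X)^(n+1) * (1+X)^(2*p+2)) := by rw [hkey1, hkey2]
    _ = (4^(p+1) * X^(p+1)) * ((1+X)^e * (1+X)^(2*p+2))
        * (I^(2 + 2*p + e) * (1-X)^(n+1)) := by
        rw [mul_pow (1+X) I e]
        ring
    _ = (4^(p+1) * X^(p+1)) * (1+X)^(n+1) * (I^(n+1) * (1-X)^(n+1)) := by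
        rw [← pow_add, e3, e2]
    _ = 4^(p+1) * X^(p+1) * (1+X)^(n+1) := by rw [hIP, mul_one]
    _ = (1 + X)^(n+1) * ((1 - X)^(n+1))⁻¹ * (4 * X * (((1 + X)^2)⁻¹))^(p + 1)
        * ((1-X)^(n+1) * (1+X)^(2*p+2)) := by
        have h4 : (4 * X * (((1 + X)^2)⁻¹) : PowerSeries ℚ)^(p+1)
            = 4^(p+1) * X^(p+1) * ((((1+X)^2)⁻¹))^(p+1) := by rw [mul_pow, mul_pow]
        have h5 : ((1+X : PowerSeries ℚ))^(2*p+2) = ((1+X)^2)^(p+1) := by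
          have h5' : 2*p+2 = 2*(p+1) := by ring
          rw [h5', pow_mul]
        have h6 : ((((1+X : PowerSeries ℚ)^2)⁻¹))^(p+1) * ((1+X)^2)^(p+1) = 1 := by
          rw [← mul_pow, hK, one_pow]
        calc (4:PowerSeries ℚ)^(p+1) * X^(p+1) * (1+X)^(n+1)
            = (4^(p+1) * X^(p+1)) * (1+X)^(n+1) * 1 * 1 := by ring
          _ = (4^(p+1) * X^(p+1)) * (1+X)^(n+1)
              * (((1 - X)^(n+1))⁻¹ * (1-X)^(n+1))
              * (((((1+X)^2)⁻¹))^(p+1) * ((1+X)^2)^(p+1)) := by rw [hJ, h6]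
          _ = (1 + X)^(n+1) * ((1 - X)^(n+1))⁻¹
              * (4^(p+1) * X^(p+1) * ((((1+X)^2)⁻¹))^(p+1))
              * ((1-X)^(n+1) * ((1+X)^2)^(p+1)) := by ring
          _ = (1 + X)^(n+1) * ((1 - X)^(n+1))⁻¹ * (4 * X * (((1 + X)^2)⁻¹))^(p + 1)
              * ((1-X)^(n+1) * (1+X)^(2*p+2)) := by rw [← h4, ← h5]
end PS

section Glue

variable {n : ℕ}

def dperm (π : Equiv.Perm (Fin n)) : ℕ → Bool := fun s =>
  if h : s + 1 < n then decide (π ⟨s+1, h⟩ < π ⟨s, Nat.lt_of_succ_lt h⟩) else false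

def p0 (π : Equiv.Perm (Fin n)) (s : ℕ) : ℕ := if h : s < n then (π ⟨s, h⟩ : ℕ) else 0

lemma p0_eq (π : Equiv.Perm (Fin n)) {s : ℕ} (h : s < n) (pf : s < n) :
    (π ⟨s, pf⟩ : ℕ) = p0 π s := by rw [p0, dif_pos h]

lemma p0_ne (π : Equiv.Perm (Fin n)) {s t : ℕ} (hs : s < n) (ht : t < n) (hne : s ≠ t) :
    p0 π s ≠ p0 π t := by
  rw [p0, dif_pos hs, p0, dif_pos ht]
  intro h
  have h2 : π ⟨s, hs⟩ = π ⟨t, ht⟩ := Fin.ext h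
  have := π.injective h2
  rw [Fin.mk.injEq] at this
  exact hne this

lemma dperm_true_iff (π : Equiv.Perm (Fin n)) {s : ℕ} (hs : s+1 < n) :
    dperm π s = true ↔ p0 π (s+1) < p0 π s := by
  rw [dperm, dif_pos hs, decide_eq_true_iff, Fin.lt_def,
    p0_eq π hs hs, p0_eq π (Nat.lt_of_succ_lt hs) (Nat.lt_of_succ_lt hs)]

lemma dperm_false_iff (π : Equiv.Perm (Fin n)) {s : ℕ} (hs : s+1 < n) :
    dperm π s = false ↔ p0 π s < p0 π (s+1) := by
  have hne := p0_ne π (Nat.lt_of_succ_lt hs) hs (by omega)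
  rw [← Bool.not_eq_true, dperm_true_iff π hs]
  omega

def dk (x : ℕ) : ℤ := if x % 2 = 1 then (((x+1)/2 : ℕ) : ℤ) else -(((x/2 : ℕ) : ℤ) + 1)

lemma ek_nonneg {a : ℤ} (ha : a ≠ 0) : 0 ≤ ek a := by
  unfold ek; split_ifs <;> omega

lemma ek_lt {a : ℤ} {k : ℕ} (ha : a ≠ 0) (hb : |a| ≤ (k:ℤ)) : ek a < 2*k := by
  have := abs_le.1 hb
  unfold ek; split_ifs <;> omega

lemma dk_ek {a : ℤ} (ha : a ≠ 0) : dk (ek a).toNat = a := by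
  unfold ek dk; split_ifs <;> omega

lemma dk_props {k : ℕ} (x : ℕ) (hx : x < 2*k) :
    dk x ≠ 0 ∧ |dk x| ≤ (k:ℤ) ∧ (ek (dk x)).toNat = x := by
  rw [abs_le]
  unfold dk ek; split_ifs <;> refine ⟨by omega, ⟨by omega, by omega⟩, by omega⟩

lemma cond_iff_desc {k : ℕ} {a b : ℤ} (ha1 : a ≠ 0) (ha2 : |a| ≤ (k:ℤ))
    (hb1 : b ≠ 0) (hb2 : |b| ≤ (k:ℤ)) :
    (ek a < ek b ∨ (a = b ∧ b < 0)) ↔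
      ((ek a).toNat < (ek b).toNat ∨
        ((ek a).toNat = (ek b).toNat ∧ (ek a).toNat % 2 = 0)) := by
  have h1 := abs_le.1 ha2
  have h2 := abs_le.1 hb2
  unfold ek; split_ifs <;> omega

lemma cond_iff_asc {k : ℕ} {a b : ℤ} (ha1 : a ≠ 0) (ha2 : |a| ≤ (k:ℤ))
    (hb1 : b ≠ 0) (hb2 : |b| ≤ (k:ℤ)) :
    (ek a < ek b ∨ (a = b ∧ 0 < b)) ↔
      ((ek a).toNat < (ek b).toNat ∨
        ((ek a).toNat = (ek b).toNat ∧ (ek a).toNat % 2 = 1)) := by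
  have h1 := abs_le.1 ha2
  have h2 := abs_le.1 hb2
  unfold ek; split_ifs <;> omega

lemma count_eq (π : Equiv.Perm (Fin n)) (k : ℕ) :
    enrichedCount π k
      = ((univ : Finset (Fin n → Fin (2*k))).filter (validE (dperm π))).card := by
  rw [← Fintype.card_subtype, ← Nat.card_eq_fintype_card, enrichedCount]
  apply Nat.card_congr
  refine ⟨fun a => ⟨fun i => ⟨(ek (a.1 i)).toNat, by
      have h1 := (a.2.1 i).1
      have h2 := (a.2.1 i).2
      have := ek_nonneg h1
      have := ek_lt h1 h2
      omega⟩, ?_⟩,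
    fun e => ⟨fun i => dk ((e.1 i : ℕ)), ?_, ?_⟩, ?_, ?_⟩
  · -- validity of the encoded sequence
    intro s hs
    have hcond := a.2.2 s hs
    have hbd1 := a.2.1 ⟨s, Nat.lt_of_succ_lt hs⟩
    have hbd2 := a.2.1 ⟨s+1, hs⟩
    rw [okP]
    rw [show eN (fun i : Fin n => (⟨(ek (a.1 i)).toNat, by
        have h1 := (a.2.1 i).1
        have h2 := (a.2.1 i).2
        have := ek_nonneg h1
        have := ek_lt h1 h2
        omega⟩ : Fin (2*k))) s = (ek (a.1 ⟨s, Nat.lt_of_succ_lt hs⟩)).toNat from by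
      rw [eN, dif_pos (Nat.lt_of_succ_lt hs)]]
    rw [show eN (fun i : Fin n => (⟨(ek (a.1 i)).toNat, by
        have h1 := (a.2.1 i).1
        have h2 := (a.2.1 i).2
        have := ek_nonneg h1
        have := ek_lt h1 h2
        omega⟩ : Fin (2*k))) (s+1) = (ek (a.1 ⟨s+1, hs⟩)).toNat from by
      rw [eN, dif_pos hs]]
    by_cases hlt : π ⟨s + 1, hs⟩ < π ⟨s, Nat.lt_of_succ_lt hs⟩
    · rw [if_pos hlt] at hcond
      have hd : dperm π s = true := by
        rw [dperm, dif_pos hs, decide_eq_true_iff]; exact hlt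
      rw [hd, if_pos rfl]
      exact (cond_iff_desc hbd1.1 hbd1.2 hbd2.1 hbd2.2).1 hcond
    · rw [if_neg hlt] at hcond
      have hd : dperm π s = false := by
        rw [dperm, dif_pos hs]
        simpa using hlt
      rw [hd]
      simp only [Bool.false_eq_true, if_false]
      exact (cond_iff_asc hbd1.1 hbd1.2 hbd2.1 hbd2.2).1 hcond
  · -- part conditions of decoded
    intro i
    have := (e.1 i).isLt
    exact ⟨(dk_props _ this).1, (dk_props _ this).2.1⟩
  · -- validity of decoded
    intro s hs
    have hval := e.2 s hs
    rw [okP] at hval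
    have hb1 := (e.1 ⟨s, Nat.lt_of_succ_lt hs⟩).isLt
    have hb2 := (e.1 ⟨s+1, hs⟩).isLt
    obtain ⟨hne1, hle1, het1⟩ := dk_props (k := k) _ hb1
    obtain ⟨hne2, hle2, het2⟩ := dk_props (k := k) _ hb2
    rw [show eN e.1 s = (e.1 ⟨s, Nat.lt_of_succ_lt hs⟩ : ℕ) from by
      rw [eN, dif_pos (Nat.lt_of_succ_lt hs)]] at hval
    rw [show eN e.1 (s+1) = (e.1 ⟨s+1, hs⟩ : ℕ) from by
      rw [eN, dif_pos hs]] at hval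
    by_cases hlt : π ⟨s + 1, hs⟩ < π ⟨s, Nat.lt_of_succ_lt hs⟩
    · rw [if_pos hlt]
      have hd : dperm π s = true := by
        rw [dperm, dif_pos hs, decide_eq_true_iff]; exact hlt
      rw [hd, if_pos rfl] at hval
      apply (cond_iff_desc hne1 hle1 hne2 hle2).2
      rw [het1, het2]
      exact hval
    · rw [if_neg hlt]
      have hd : dperm π s = false := by
        rw [dperm, dif_pos hs]
        simpa using hlt
      rw [hd] at hval
      simp only [Bool.false_eq_true, if_false] at hval
      apply (cond_iff_asc hne1 hle1 hne2 hle2).2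
      rw [het1, het2]
      exact hval
  · -- left inverse
    intro a
    apply Subtype.ext
    funext i
    exact dk_ek (a.2.1 i).1
  · -- right inverse
    intro e
    apply Subtype.ext
    funext i
    apply Fin.ext
    exact (dk_props _ (e.1 i).isLt).2.2

lemma mem_intPk_iff (π : Equiv.Perm (Fin n)) {s : ℕ} (hs : s + 2 < n) :
    (s + 2 ∈ intPk π) ↔ (dperm π s = false ∧ dperm π (s+1) = true) := by
  rw [intPk, mem_filter, mem_Ioo, isPk]
  have hv1 : pval π (s+1) = p0 π s + 1 := by
    rw [pval, dif_pos ⟨by omega, by omega⟩, p0_eq π (by omega)]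
    norm_num
  have hv2 : pval π (s+2) = p0 π (s+1) + 1 := by
    rw [pval, dif_pos ⟨by omega, by omega⟩, p0_eq π (by omega)]
    norm_num
  have hv3 : pval π (s+3) = p0 π (s+2) + 1 := by
    rw [pval, dif_pos ⟨by omega, by omega⟩, p0_eq π (by omega)]
    norm_num
  have e1 : s + 2 - 1 = s + 1 := rfl
  have e2 : s + 2 + 1 = s + 3 := rfl
  rw [e1, e2, hv1, hv2, hv3]
  rw [dperm_false_iff π (show s + 1 < n by omega), dperm_true_iff π (show s+1+1 < n by omega)]
  rw [show s + 1 + 1 = s + 2 by omega]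
  constructor
  · rintro ⟨_, h1, h2⟩
    exact ⟨by omega, by omega⟩
  · rintro ⟨h1, h2⟩
    exact ⟨⟨by omega, by omega⟩, by omega, by omega⟩

lemma peaks_eq (π : Equiv.Perm (Fin n)) :
    (intPk π).card = (peaksD n (dperm π)).card := by
  apply card_bij (i := fun i _ => i - 2)
  · intro i hi
    have hmem := hi
    rw [intPk, mem_filter, mem_Ioo] at hmem
    obtain ⟨⟨hi1, hi2⟩, _⟩ := hmem
    have hieq : i = (i - 2) + 2 := by omega
    rw [hieq] at hi
    have := (mem_intPk_iff π (show (i-2) + 2 < n by omega)).1 hi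
    rw [peaksD, mem_filter, mem_range]
    exact ⟨by omega, this.1, this.2⟩
  · intro i hi j hj hij
    rw [intPk, mem_filter, mem_Ioo] at hi hj
    omega
  · intro s hsm
    rw [peaksD, mem_filter, mem_range] at hsm
    refine ⟨s + 2, ?_, by omega⟩
    exact (mem_intPk_iff π (by omega)).2 ⟨hsm.2.1, hsm.2.2⟩

end Glue

end Stmt9Aux

open Stmt9Aux in
open PowerSeries in
theorem stmt9 (n : ℕ) (hn : 1 ≤ n) (π : Equiv.Perm (Fin n)) :
    ((2 : PowerSeries ℚ) * PowerSeries.mk (fun k => (enrichedCount π k : ℚ)) =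
      (1 + X) ^ (n + 1) * ((1 - X) ^ (n + 1))⁻¹ *
        (4 * X * (((1 + X) ^ 2)⁻¹)) ^ ((intPk π).card + 1)) ∧
    ∀ π' : Equiv.Perm (Fin n), (intPk π').card = (intPk π).card →
      ∀ k, enrichedCount π' k = enrichedCount π k := by
  have key : ∀ (σ : Equiv.Perm (Fin n)),
      (2 : PowerSeries ℚ) * PowerSeries.mk (fun k => (enrichedCount σ k : ℚ))
      = (1 + X)^(n+1) * ((1 - X)^(n+1))⁻¹
          * (4*X*(((1+X)^2)⁻¹))^((intPk σ).card + 1) := by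
    intro σ
    have h2 : PowerSeries.mk (fun k => (enrichedCount σ k : ℚ))
        = PowerSeries.mk (fun k =>
            ((∑ S ∈ goodS n (dperm σ), 2^(S.card+1) * k.choose (S.card+1) : ℕ) : ℚ)) := by
      ext kk
      rw [PowerSeries.coeff_mk, PowerSeries.coeff_mk]
      congr 1
      rw [count_eq σ kk, countE hn (dperm σ)]
    rw [h2, gf_formula hn (dperm σ), peaks_eq σ]
  constructor
  · exact key π
  · intro π' hpk k
    have e1 := key π'
    rw [hpk] at e1
    have e2 := key π
    have h2ne : (2 : PowerSeries ℚ) ≠ 0 := by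
      intro h
      have := congrArg (PowerSeries.constantCoeff (R := ℚ)) h
      rw [map_ofNat, map_zero] at this
      norm_num at this
    have hmk : PowerSeries.mk (fun k => (enrichedCount π' k : ℚ))
        = PowerSeries.mk (fun k => (enrichedCount π k : ℚ)) :=
      mul_left_cancel₀ h2ne (e1.trans e2.symm)
    have := congrArg (PowerSeries.coeff (R := ℚ) k) hmk
    rw [PowerSeries.coeff_mk, PowerSeries.coeff_mk] at this
    exact_mod_cast this
end
end
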